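/- arXiv:0803.0705 — 4 statements merged into one kernel-verified Lean document; each statement's English description precedes it below -/
import Mathlib

section
/- Let k ≥ 1 be an integer, a_1 < … < a_k distinct real numbers, and ε_1, …, ε_k positive reals with ε_1 + … + ε_k = 1. Let P : ℂ → ℂ be a polynomial of degree at most k−1 and set E(x,y) := (x − y)·∏_{j=1}^k (y − a_j) + P(y). Suppose there exist R > 0 and functions y_1, …, y_k : {x ∈ ℂ : |x| > R} → ℂ such that for each i = 1, …, k and all |x| > R one has E(x, y_i(x)) = 0 and y_i(x) = a_i + ε_i/x + O(1/x²) as |x| → ∞. Then P is uniquely determined: P(y) = −∑_{j=1}^k ε_j ∏_{i≠j} (y − a_i) for all y ∈ ℂ, and consequently E(x,y) = ∏_{j=1}^k (y − a_j) · ( x − y − ∑_{j=1}^k ε_j/(y − a_j) ) for all y ∈ ℂ \ {a_1, …, a_k}. -/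
open Filter Asymptotics

/-- determination of the polynomial `P` in the spectral curve
`E(x,y) = (x-y)·∏_j (y-a_j) + P(y)` of the Gaussian matrix model with external source,
from the existence of branches `y_i(x) = a_i + ε_i/x + O(1/x²)`. -/
theorem stmt_0 (k : ℕ) (hk : 1 ≤ k) (a ε : Fin k → ℝ)
    (ha : StrictMono a) (hε : ∀ i, 0 < ε i) (hsum : ∑ i, ε i = 1)
    (P : Polynomial ℂ) (hP : P.degree ≤ (k - 1 : ℕ))
    (E : ℂ → ℂ → ℂ)
    (hE : ∀ x y : ℂ, E x y = (x - y) * ∏ j, (y - (a j : ℂ)) + P.eval y)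
    (R : ℝ) (hR : 0 < R) (Y : Fin k → ℂ → ℂ)
    (hroot : ∀ i, ∀ x : ℂ, R < ‖x‖ → E x (Y i x) = 0)
    (hasymp : ∀ i, (fun x : ℂ => Y i x - (a i : ℂ) - (ε i : ℂ) / x)
      =O[Bornology.cobounded ℂ] fun x : ℂ => 1 / x ^ 2) :
    (∀ y : ℂ, P.eval y = -∑ j, (ε j : ℂ) * ∏ i ∈ Finset.univ.erase j, (y - (a i : ℂ))) ∧
    (∀ x y : ℂ, (∀ j, y ≠ (a j : ℂ)) →
      E x y = (∏ j, (y - (a j : ℂ))) *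
        (x - y - ∑ j, (ε j : ℂ) / (y - (a j : ℂ)))) := by
  classical
  set L := Bornology.cobounded ℂ with hL
  -- eventually `R < |x|` and `x ≠ 0`
  have hev : ∀ᶠ x : ℂ in L, R < ‖x‖ ∧ x ≠ 0 := by
    filter_upwards [eventually_cobounded_le_norm (R + 1)] with x hx
    have h1 : R < ‖x‖ := by linarith
    refine ⟨by simpa using h1, ?_⟩
    intro h; rw [h] at h1; simp at h1; linarith
  -- limit of 1/x^2
  have hsq : Tendsto (fun x : ℂ => 1 / x ^ 2) L (nhds 0) := by
    have := (tendsto_inv₀_cobounded (α := ℂ)).pow 2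
    simp only [zero_pow, ne_eq, OfNat.ofNat_ne_zero, not_false_eq_true] at this
    refine this.congr fun x => by rw [one_div, inv_pow]
  -- Step A : value of P at each a_i
  have hPa : ∀ i : Fin k, P.eval ((a i : ℂ)) =
      -((ε i : ℂ) * ∏ j ∈ Finset.univ.erase i, ((a i : ℂ) - (a j : ℂ))) := by
    intro i
    set f : ℂ → ℂ := fun x => Y i x - (a i : ℂ) - (ε i : ℂ) / x with hf
    have hfO := hasymp i
    have hf0 : Tendsto f L (nhds 0) := hfO.trans_tendsto hsq
    have hxf : Tendsto (fun x => x * f x) L (nhds 0) := by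
      have hO : (fun x => x * f x) =O[L] fun x : ℂ => x * (1 / x ^ 2) :=
        (isBigO_refl (fun x : ℂ => x) L).mul hfO
      refine hO.trans_tendsto ?_
      have : Tendsto (fun x : ℂ => x⁻¹) L (nhds 0) := tendsto_inv₀_cobounded
      refine this.congr' ?_
      filter_upwards [hev] with x hx
      have hx0 : x ≠ 0 := hx.2
      rw [one_div, ← inv_pow, sq, ← mul_assoc, mul_inv_cancel₀ hx0, one_mul]
    have hinv : Tendsto (fun x : ℂ => (ε i : ℂ) / x) L (nhds 0) := by
      simpa using (tendsto_inv₀_cobounded (α := ℂ)).const_mul ((ε i : ℂ)) |>.congr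
        fun x => by rw [div_eq_mul_inv]
    have hY : Tendsto (Y i) L (nhds ((a i : ℂ))) := by
      have : Tendsto (fun x => f x + (ε i : ℂ) / x + (a i : ℂ)) L
          (nhds (0 + 0 + (a i : ℂ))) := (hf0.add hinv).add tendsto_const_nhds
      simpa using this.congr fun x => by simp [hf]
    have hxY : Tendsto (fun x => x * (Y i x - (a i : ℂ))) L (nhds ((ε i : ℂ))) := by
      have h1 : Tendsto (fun x => x * f x + (ε i : ℂ)) L (nhds (0 + (ε i : ℂ))) :=
        hxf.add tendsto_const_nhds
      rw [zero_add] at h1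
      refine h1.congr' ?_
      filter_upwards [hev] with x hx
      have hx0 : x ≠ 0 := hx.2
      simp only [hf]
      have h2 : x * ((ε i : ℂ) / x) = (ε i : ℂ) := by field_simp
      linear_combination -h2
    -- the auxiliary function g
    set g : ℂ → ℂ := fun x =>
      (x * (Y i x - (a i : ℂ)) - Y i x * (Y i x - (a i : ℂ))) *
        ∏ j ∈ Finset.univ.erase i, (Y i x - (a j : ℂ)) with hg
    have hprodY : Tendsto (fun x => ∏ j ∈ Finset.univ.erase i, (Y i x - (a j : ℂ))) L
        (nhds (∏ j ∈ Finset.univ.erase i, ((a i : ℂ) - (a j : ℂ)))) := by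
      refine tendsto_finset_prod _ fun j _ => hY.sub tendsto_const_nhds
    have hYY : Tendsto (fun x => Y i x * (Y i x - (a i : ℂ))) L (nhds 0) := by
      have := hY.mul (hY.sub (tendsto_const_nhds (x := (a i : ℂ))))
      simpa using this
    have hgt : Tendsto g L (nhds ((ε i : ℂ) *
        ∏ j ∈ Finset.univ.erase i, ((a i : ℂ) - (a j : ℂ)))) := by
      have := ((hxY.sub hYY).mul hprodY)
      simpa using this
    have hPt : Tendsto (fun x => -P.eval (Y i x)) L (nhds (-P.eval ((a i : ℂ)))) :=
      ((P.continuous_aeval.tendsto _).comp hY).neg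
    have heq : g =ᶠ[L] fun x => -P.eval (Y i x) := by
      filter_upwards [hev] with x hx
      have h0 := hroot i x hx.1
      rw [hE] at h0
      have hsplit : (∏ j, (Y i x - (a j : ℂ))) =
          (Y i x - (a i : ℂ)) * ∏ j ∈ Finset.univ.erase i, (Y i x - (a j : ℂ)) :=
        (Finset.mul_prod_erase _ _ (Finset.mem_univ i)).symm
      have : (x - Y i x) * ∏ j, (Y i x - (a j : ℂ)) = -P.eval (Y i x) := by
        linear_combination h0
      rw [hg]
      rw [hsplit] at this
      linear_combination this
    have := tendsto_nhds_unique (hgt.congr' heq) hPt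
    linear_combination this
  -- Step B : identify P as a polynomial
  set Q : Polynomial ℂ := P + ∑ j, Polynomial.C ((ε j : ℂ)) *
      ∏ i ∈ Finset.univ.erase j, (Polynomial.X - Polynomial.C ((a i : ℂ))) with hQ
  have hQeval : ∀ y : ℂ, Q.eval y = P.eval y +
      ∑ j, (ε j : ℂ) * ∏ i ∈ Finset.univ.erase j, (y - (a i : ℂ)) := by
    intro y
    simp [hQ, Polynomial.eval_finset_sum, Polynomial.eval_prod]
  have hinj : Function.Injective (fun i : Fin k => ((a i : ℂ))) := by
    intro i j hij
    simp only at hij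
    exact ha.injective (by exact_mod_cast hij)
  have hQroot : ∀ m : Fin k, Q.eval ((a m : ℂ)) = 0 := by
    intro m
    rw [hQeval]
    have hsumeq : ∑ j, (ε j : ℂ) * ∏ i ∈ Finset.univ.erase j, ((a m : ℂ) - (a i : ℂ)) =
        (ε m : ℂ) * ∏ i ∈ Finset.univ.erase m, ((a m : ℂ) - (a i : ℂ)) := by
      refine Finset.sum_eq_single_of_mem m (Finset.mem_univ m) ?_
      intro j _ hjm
      have hm : m ∈ Finset.univ.erase j := Finset.mem_erase.mpr ⟨fun h => hjm h.symm, Finset.mem_univ m⟩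
      rw [Finset.prod_eq_zero hm (by ring), mul_zero]
    rw [hsumeq, hPa m]
    ring
  have hQdeg : Q.natDegree < k := by
    have hPd : P.natDegree ≤ k - 1 := Polynomial.natDegree_le_iff_degree_le.mpr hP
    have hSd : (∑ j, Polynomial.C ((ε j : ℂ)) *
        ∏ i ∈ Finset.univ.erase j, (Polynomial.X - Polynomial.C ((a i : ℂ)))).natDegree ≤ k - 1 := by
      refine Polynomial.natDegree_sum_le_of_forall_le _ _ fun j _ => ?_
      calc (Polynomial.C ((ε j : ℂ)) *
            ∏ i ∈ Finset.univ.erase j, (Polynomial.X - Polynomial.C ((a i : ℂ)))).natDegree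
          ≤ (Polynomial.C ((ε j : ℂ))).natDegree +
            (∏ i ∈ Finset.univ.erase j, (Polynomial.X - Polynomial.C ((a i : ℂ)))).natDegree :=
            Polynomial.natDegree_mul_le
        _ = (∏ i ∈ Finset.univ.erase j, (Polynomial.X - Polynomial.C ((a i : ℂ)))).natDegree := by
            simp
        _ ≤ ∑ i ∈ Finset.univ.erase j, (Polynomial.X - Polynomial.C ((a i : ℂ))).natDegree :=
            Polynomial.natDegree_prod_le _ _
        _ ≤ k - 1 := by
            simp [Polynomial.natDegree_X_sub_C, Finset.card_erase_of_mem]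
    have : Q.natDegree ≤ k - 1 := le_trans (Polynomial.natDegree_add_le _ _) (max_le hPd hSd)
    omega
  have hQ0 : Q = 0 := by
    refine Polynomial.eq_zero_of_natDegree_lt_card_of_eval_eq_zero Q hinj hQroot ?_
    simpa using hQdeg
  have hPy : ∀ y : ℂ, P.eval y =
      -∑ j, (ε j : ℂ) * ∏ i ∈ Finset.univ.erase j, (y - (a i : ℂ)) := by
    intro y
    have h := congrArg (Polynomial.eval y) hQ0
    rw [hQeval] at h
    simp only [Polynomial.eval_zero] at h
    linear_combination h
  refine ⟨hPy, ?_⟩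
  -- Step C : factorized form of E
  intro x y hy
  have hne : ∀ j : Fin k, y - (a j : ℂ) ≠ 0 := fun j => sub_ne_zero.mpr (hy j)
  have key : ∀ j : Fin k, (∏ i, (y - (a i : ℂ))) * ((ε j : ℂ) / (y - (a j : ℂ))) =
      (ε j : ℂ) * ∏ i ∈ Finset.univ.erase j, (y - (a i : ℂ)) := by
    intro j
    rw [← Finset.mul_prod_erase _ _ (Finset.mem_univ j)]
    field_simp [hne j]
  rw [hE, hPy y, mul_sub, mul_sub, Finset.mul_sum]
  rw [Finset.sum_congr rfl fun j _ => key j]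
  ring
end

section
/- Let k ≥ 1 be an integer, a_1 < … < a_k distinct real numbers, and ε_1, …, ε_k positive reals with ε_1 + … + ε_k = 1. Define F(z) := z + ∑_{j=1}^k ε_j/(z − a_j) on ℂ \ {a_1, …, a_k}. Then there exist R > 0 and δ > 0, with the discs D(a_1, δ), …, D(a_k, δ) pairwise disjoint, such that for every x ∈ ℂ with |x| > R the equation F(z) = x has exactly k+1 solutions in ℂ \ {a_1, …, a_k}, namely: exactly one solution in each disc D(a_i, δ) (i = 1, …, k), exactly one solution in the disc D(x, 1), and no other solutions. -/
set_option maxHeartbeats 1000000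


open Filter

private lemma aux_fixed (f : ℂ → ℂ) (c : ℂ) (r : ℝ) (hr : 0 < r)
    (hmaps : Set.MapsTo f (Metric.closedBall c r) (Metric.closedBall c r))
    (hlip : ∀ z ∈ Metric.closedBall c r, ∀ w ∈ Metric.closedBall c r,
      dist (f z) (f w) ≤ (1/2) * dist z w) :
    ∃ z ∈ Metric.closedBall c r, f z = z := by
  have hL : LipschitzOnWith (1/2 : NNReal) f (Metric.closedBall c r) := by
    apply LipschitzOnWith.of_dist_le_mul
    intro z hz w hw
    have := hlip z hz w hw
    rw [show ((1/2 : NNReal) : ℝ) = 1/2 by norm_num]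
    exact this
  have hc : ContractingWith (1/2 : NNReal) (hmaps.restrict f _ _) :=
    ⟨by exact_mod_cast (by norm_num : (1/2:ℝ) < 1), hL.mapsToRestrict hmaps⟩
  obtain ⟨z, hz, hfz, -⟩ := hc.exists_fixedPoint' Metric.isClosed_closedBall.isComplete
    hmaps (Metric.mem_closedBall_self hr.le) (edist_ne_top _ _)
  exact ⟨z, hz, hfz⟩

private lemma aux_diff2 (e : ℝ) (p q : ℂ) (hp : p ≠ 0) (hq : q ≠ 0) :
    (e:ℂ)/p - (e:ℂ)/q = (q - p) * ((e:ℂ)/(p*q)) := by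
  field_simp

/-- for `|x|` large, the equation `F(z) = x` has exactly `k+1` solutions:
one near each pole `a_i` and one near `x` itself. -/
theorem stmt_3 (k : ℕ) (hk : 1 ≤ k) (a ε : Fin k → ℝ)
    (ha : StrictMono a) (hε : ∀ i, 0 < ε i) (hsum : ∑ i, ε i = 1)
    (F : ℂ → ℂ)
    (hF : ∀ z : ℂ, F z = z + ∑ j, (ε j : ℂ) / (z - (a j : ℂ))) :
    ∃ R > (0 : ℝ), ∃ δ > (0 : ℝ),
      (∀ i j : Fin k, i ≠ j →
        Disjoint (Metric.ball ((a i : ℂ)) δ) (Metric.ball ((a j : ℂ)) δ)) ∧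
      ∀ x : ℂ, R < ‖x‖ →
        (∀ i : Fin k, ∃! z : ℂ,
          z ∈ Metric.ball ((a i : ℂ)) δ ∧ (∀ j, z ≠ (a j : ℂ)) ∧ F z = x) ∧
        (∃! z : ℂ, z ∈ Metric.ball x 1 ∧ (∀ j, z ≠ (a j : ℂ)) ∧ F z = x) ∧
        (∀ i : Fin k, Disjoint (Metric.ball x 1) (Metric.ball ((a i : ℂ)) δ)) ∧
        ({z : ℂ | (∀ j, z ≠ (a j : ℂ)) ∧ F z = x} ⊆
          Metric.ball x 1 ∪ ⋃ i : Fin k, Metric.ball ((a i : ℂ)) δ) ∧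
        Set.ncard {z : ℂ | (∀ j, z ≠ (a j : ℂ)) ∧ F z = x} = k + 1 := by
  classical
  have hne : Nonempty (Fin k) := ⟨⟨0, hk⟩⟩
  have hεnorm : ∀ j, ‖((ε j : ℝ) : ℂ)‖ = ε j := fun j => by
    rw [Complex.norm_real, Real.norm_eq_abs, abs_of_pos (hε j)]
  have hane : ∀ i j : Fin k, i ≠ j → (a i : ℂ) ≠ (a j : ℂ) := by
    intro i j hij h
    exact hij (ha.injective (Complex.ofReal_inj.mp h))
  -- bound A on the poles
  obtain ⟨A₀, hA₀⟩ := Finite.exists_le (fun j : Fin k => ‖((a j : ℝ) : ℂ)‖)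
  set A : ℝ := max A₀ 0 with hAdef
  have hA0 : 0 ≤ A := le_max_right _ _
  have hA : ∀ j, ‖((a j : ℝ) : ℂ)‖ ≤ A := fun j => le_trans (hA₀ j) (le_max_left _ _)
  -- minimal gap d
  obtain ⟨d, hd, hdle⟩ : ∃ d > (0:ℝ), ∀ i j : Fin k, i ≠ j →
      d ≤ dist ((a i : ℂ)) ((a j : ℂ)) := by
    have hmem : ∀ i j : Fin k, i ≠ j →
        (i, j) ∈ Finset.univ.filter (fun p : Fin k × Fin k => p.1 ≠ p.2) := by
      intro i j hij
      exact Finset.mem_filter.mpr ⟨Finset.mem_univ _, hij⟩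
    rcases Finset.eq_empty_or_nonempty
        (Finset.univ.filter (fun p : Fin k × Fin k => p.1 ≠ p.2)) with hse | hsne
    · refine ⟨1, one_pos, fun i j hij => ?_⟩
      exact absurd (hmem i j hij) (by rw [hse]; exact Finset.notMem_empty _)
    · refine ⟨Finset.inf' _ hsne (fun p => dist ((a p.1 : ℂ)) ((a p.2 : ℂ))), ?_, ?_⟩
      · rw [gt_iff_lt, Finset.lt_inf'_iff]
        intro p hp
        exact dist_pos.mpr (hane p.1 p.2 (Finset.mem_filter.mp hp).2)
      · intro i j hij
        exact Finset.inf'_le _ (hmem i j hij)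
  -- minimal weight m
  obtain ⟨i₀, hi₀⟩ := Finset.exists_min_image Finset.univ ε ⟨hne.some, Finset.mem_univ _⟩
  set m : ℝ := ε i₀ with hmdef
  have hm : 0 < m := hε i₀
  have hmle : ∀ i, m ≤ ε i := fun i => hi₀.2 i (Finset.mem_univ i)
  -- choice of δ
  set δ : ℝ := min (d/4) (Real.sqrt (m / (2*(1 + 4/d^2)))) with hδdef
  have hd2 : (0:ℝ) < 1 + 4/d^2 := by positivity
  have hδ : 0 < δ := by
    apply lt_min (by positivity)
    exact Real.sqrt_pos.mpr (by positivity)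
  have hδd : δ ≤ d/4 := min_le_left _ _
  have hδsq : δ^2 * (1 + 4/d^2) < m := by
    have h1 : δ ≤ Real.sqrt (m / (2*(1 + 4/d^2))) := min_le_right _ _
    have h2 : δ^2 ≤ m / (2*(1 + 4/d^2)) := by
      have := Real.sq_sqrt (le_of_lt (show (0:ℝ) < m / (2*(1 + 4/d^2)) by positivity))
      nlinarith [hδ.le]
    have h3 : δ^2 * (1 + 4/d^2) ≤ m/2 := by
      have h4 := mul_le_mul_of_nonneg_right h2 hd2.le
      calc δ^2 * (1 + 4/d^2) ≤ m / (2*(1 + 4/d^2)) * (1 + 4/d^2) := h4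
        _ = m/2 := by field_simp
    linarith
  -- choice of R
  set R : ℝ := A + 1/δ + 2/δ + 2/d + 4/d^2 + δ + 20 with hRdef
  have hR : 0 < R := by positivity
  clear_value A m δ R
  have hABd : ∀ i j : Fin k, i ≠ j →
      Disjoint (Metric.ball ((a i : ℂ)) δ) (Metric.ball ((a j : ℂ)) δ) := by
    intro i j hij
    apply Metric.ball_disjoint_ball
    have := hdle i j hij
    linarith
  refine ⟨R, hR, δ, hδ, hABd, ?_⟩
  intro x hx
  have hxR : R < ‖x‖ := by exact hx
  have h1δ : (0:ℝ) < 1/δ := by positivity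
  have h1d : (0:ℝ) < 1/d := by positivity
  have h2δ : (0:ℝ) < 2/δ := by positivity
  have h2d : (0:ℝ) < 2/d := by positivity
  have h4d2 : (0:ℝ) < 4/d^2 := by positivity
  -- lower bound on distance to poles for points near x
  have hlow : ∀ (z : ℂ) (t : ℝ), ‖z - x‖ ≤ t → ∀ j, ‖x‖ - t - A ≤ ‖z - ((a j : ℝ) : ℂ)‖ := by
    intro z t hzt j
    have h1 : ‖x - ((a j : ℝ) : ℂ)‖ - ‖z - ((a j : ℝ) : ℂ)‖ ≤ ‖x - z‖ := by
      have := norm_sub_norm_le (x - ((a j : ℝ) : ℂ)) (z - ((a j : ℝ) : ℂ))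
      simpa [sub_sub_sub_cancel_right] using this
    have h2 : ‖x‖ - ‖((a j : ℝ) : ℂ)‖ ≤ ‖x - ((a j : ℝ) : ℂ)‖ := norm_sub_norm_le x _
    have h3 : ‖x - z‖ = ‖z - x‖ := norm_sub_rev x z
    have := hA j
    linarith
  -- bound on the full sum
  have hsb : ∀ (z : ℂ) (c : ℝ), 0 < c → (∀ j, c ≤ ‖z - ((a j : ℝ) : ℂ)‖) →
      ‖∑ j, (ε j : ℂ)/(z - ((a j : ℝ) : ℂ))‖ ≤ 1/c := by
    intro z c hc hb
    calc ‖∑ j, (ε j : ℂ)/(z - ((a j : ℝ) : ℂ))‖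
        ≤ ∑ j, ‖(ε j : ℂ)/(z - ((a j : ℝ) : ℂ))‖ := norm_sum_le _ _
      _ ≤ ∑ j, ε j / c := by
          apply Finset.sum_le_sum
          intro j _
          rw [norm_div, hεnorm]
          exact div_le_div_of_nonneg_left (hε j).le hc (hb j)
      _ = 1/c := by rw [← Finset.sum_div, hsum]
  -- bound on the product sum
  have hpb : ∀ (z w : ℂ) (c : ℝ), 0 < c → (∀ j, c ≤ ‖z - ((a j : ℝ) : ℂ)‖) →
      (∀ j, c ≤ ‖w - ((a j : ℝ) : ℂ)‖) →
      ‖∑ j, (ε j : ℂ)/((z - ((a j : ℝ) : ℂ))*(w - ((a j : ℝ) : ℂ)))‖ ≤ 1/c^2 := by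
    intro z w c hc hbz hbw
    calc ‖∑ j, (ε j : ℂ)/((z - ((a j : ℝ) : ℂ))*(w - ((a j : ℝ) : ℂ)))‖
        ≤ ∑ j, ‖(ε j : ℂ)/((z - ((a j : ℝ) : ℂ))*(w - ((a j : ℝ) : ℂ)))‖ := norm_sum_le _ _
      _ ≤ ∑ j, ε j / c^2 := by
          apply Finset.sum_le_sum
          intro j _
          rw [norm_div, hεnorm, norm_mul]
          apply div_le_div_of_nonneg_left (hε j).le (by positivity)
          calc c^2 = c * c := sq c
            _ ≤ ‖z - ((a j : ℝ) : ℂ)‖ * ‖w - ((a j : ℝ) : ℂ)‖ :=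
                mul_le_mul (hbz j) (hbw j) hc.le (norm_nonneg _)
      _ = 1/c^2 := by rw [← Finset.sum_div, hsum]
  -- two distinct solutions give a sum identity
  have hcore : ∀ z w : ℂ, (∀ j, z ≠ ((a j : ℝ) : ℂ)) → (∀ j, w ≠ ((a j : ℝ) : ℂ)) →
      F z = x → F w = x → z ≠ w →
      ∑ j, (ε j : ℂ)/((z - ((a j : ℝ) : ℂ))*(w - ((a j : ℝ) : ℂ))) = 1 := by
    intro z w hz hw hFz hFw hzw
    have h0 : z + ∑ j, (ε j : ℂ)/(z - ((a j : ℝ) : ℂ))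
        = w + ∑ j, (ε j : ℂ)/(w - ((a j : ℝ) : ℂ)) := by
      rw [← hF z, ← hF w, hFz, hFw]
    have hkey : (z - w) * (1 - ∑ j, (ε j : ℂ)/((z - ((a j : ℝ) : ℂ))*(w - ((a j : ℝ) : ℂ)))) = 0 := by
      have e1 : ∑ j, (z - w) * ((ε j : ℂ)/((z - ((a j : ℝ) : ℂ))*(w - ((a j : ℝ) : ℂ))))
          = ∑ j, ((ε j : ℂ)/(w - ((a j : ℝ) : ℂ)) - (ε j : ℂ)/(z - ((a j : ℝ) : ℂ))) := by
        refine Finset.sum_congr rfl fun j _ => ?_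
        have h1 : z - ((a j : ℝ) : ℂ) ≠ 0 := sub_ne_zero.mpr (hz j)
        have h2 : w - ((a j : ℝ) : ℂ) ≠ 0 := sub_ne_zero.mpr (hw j)
        field_simp
        ring
      rw [mul_sub, mul_one, Finset.mul_sum, e1, Finset.sum_sub_distrib]
      linear_combination h0
    rcases mul_eq_zero.mp hkey with h | h
    · exact absurd (sub_eq_zero.mp h) hzw
    · linear_combination -h
  -- uniqueness near x
  have huniq_x : ∀ z w : ℂ, z ∈ Metric.ball x 1 → w ∈ Metric.ball x 1 →
      (∀ j, z ≠ ((a j : ℝ) : ℂ)) → (∀ j, w ≠ ((a j : ℝ) : ℂ)) →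
      F z = x → F w = x → z = w := by
    intro z w hz hw hzne hwne hFz hFw
    by_contra hne
    have hS := hcore z w hzne hwne hFz hFw hne
    have hbz : ∀ j, (2:ℝ) ≤ ‖z - ((a j : ℝ) : ℂ)‖ := by
      intro j
      rw [Metric.mem_ball, dist_eq_norm] at hz
      have := hlow z 1 hz.le j
      linarith
    have hbw : ∀ j, (2:ℝ) ≤ ‖w - ((a j : ℝ) : ℂ)‖ := by
      intro j
      rw [Metric.mem_ball, dist_eq_norm] at hw
      have := hlow w 1 hw.le j
      linarith
    have := hpb z w 2 two_pos hbz hbw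
    rw [hS, norm_one] at this
    norm_num at this
  -- uniqueness near a pole
  have huniq_a : ∀ (i : Fin k) (z w : ℂ), z ∈ Metric.ball ((a i : ℂ)) δ →
      w ∈ Metric.ball ((a i : ℂ)) δ →
      (∀ j, z ≠ ((a j : ℝ) : ℂ)) → (∀ j, w ≠ ((a j : ℝ) : ℂ)) →
      F z = x → F w = x → z = w := by
    intro i z w hz hw hzne hwne hFz hFw
    by_contra hne
    have hS := hcore z w hzne hwne hFz hFw hne
    rw [Metric.mem_ball, dist_eq_norm] at hz hw
    -- distance to other poles
    have hgap : ∀ (u : ℂ), ‖u - ((a i : ℝ) : ℂ)‖ < δ → ∀ j, j ≠ i →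
        d/2 ≤ ‖u - ((a j : ℝ) : ℂ)‖ := by
      intro u hu j hji
      have h1 : dist ((a i : ℂ)) ((a j : ℂ)) ≤ dist ((a i : ℂ)) u + dist u ((a j : ℂ)) :=
        dist_triangle _ _ _
      have h2 := hdle i j (fun h => hji h.symm)
      rw [dist_eq_norm] at h2
      rw [dist_eq_norm, dist_eq_norm, dist_eq_norm, norm_sub_rev ((a i : ℂ)) u] at h1
      linarith [hδd]
    obtain ⟨E, hEdef⟩ : ∃ E : ℂ, E = ∑ j ∈ Finset.univ.erase i,
      (ε j : ℂ)/((z - ((a j : ℝ) : ℂ))*(w - ((a j : ℝ) : ℂ))) := ⟨_, rfl⟩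
    have hEbound : ‖E‖ ≤ 4/d^2 := by
      rw [hEdef]
      calc ‖∑ j ∈ Finset.univ.erase i,
          (ε j : ℂ)/((z - ((a j : ℝ) : ℂ))*(w - ((a j : ℝ) : ℂ)))‖ ≤ ∑ j ∈ Finset.univ.erase i,
          ‖(ε j : ℂ)/((z - ((a j : ℝ) : ℂ))*(w - ((a j : ℝ) : ℂ)))‖ := norm_sum_le _ _
        _ ≤ ∑ j ∈ Finset.univ.erase i, ε j * (4/d^2) := by
            apply Finset.sum_le_sum
            intro j hj
            have hji : j ≠ i := Finset.ne_of_mem_erase hj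
            rw [norm_div, hεnorm, norm_mul]
            rw [show ε j * (4/d^2) = ε j / (d/2 * (d/2)) by field_simp; ring]
            apply div_le_div_of_nonneg_left (hε j).le (by positivity)
            exact mul_le_mul (hgap z hz j hji) (hgap w hw j hji) (by positivity) (norm_nonneg _)
        _ ≤ ∑ j, ε j * (4/d^2) := by
            apply Finset.sum_le_sum_of_subset_of_nonneg (Finset.subset_univ _)
            intro j _ _
            exact mul_nonneg (hε j).le (by positivity)
        _ = 4/d^2 := by rw [← Finset.sum_mul, hsum, one_mul]
    have hsplit : (ε i : ℂ)/((z - ((a i : ℝ) : ℂ))*(w - ((a i : ℝ) : ℂ))) + E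
        = ∑ j, (ε j : ℂ)/((z - ((a j : ℝ) : ℂ))*(w - ((a j : ℝ) : ℂ))) := by
      rw [hEdef]
      exact Finset.add_sum_erase Finset.univ
        (fun j => (ε j : ℂ)/((z - ((a j : ℝ) : ℂ))*(w - ((a j : ℝ) : ℂ)))) (Finset.mem_univ i)
    have hzi : 0 < ‖z - ((a i : ℝ) : ℂ)‖ := norm_pos_iff.mpr (sub_ne_zero.mpr (hzne i))
    have hwi : 0 < ‖w - ((a i : ℝ) : ℂ)‖ := norm_pos_iff.mpr (sub_ne_zero.mpr (hwne i))
    have hterm : m/δ^2 ≤ ‖(ε i : ℂ)/((z - ((a i : ℝ) : ℂ))*(w - ((a i : ℝ) : ℂ)))‖ := by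
      rw [norm_div, hεnorm, norm_mul]
      rw [show (δ:ℝ)^2 = δ * δ by ring]
      apply div_le_div₀ (hε i).le (hmle i) (mul_pos hzi hwi)
      exact mul_le_mul hz.le hw.le hwi.le hδ.le
    have htermle : ‖(ε i : ℂ)/((z - ((a i : ℝ) : ℂ))*(w - ((a i : ℝ) : ℂ)))‖ ≤ 1 + 4/d^2 := by
      have h1 : (ε i : ℂ)/((z - ((a i : ℝ) : ℂ))*(w - ((a i : ℝ) : ℂ)))
          = (∑ j, (ε j : ℂ)/((z - ((a j : ℝ) : ℂ))*(w - ((a j : ℝ) : ℂ)))) - E := by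
        linear_combination hsplit
      rw [h1, hS]
      calc ‖(1:ℂ) - E‖ ≤ ‖(1:ℂ)‖ + ‖E‖ := norm_sub_le _ _
        _ ≤ 1 + 4/d^2 := by rw [norm_one]; linarith
    have hmδ : 1 + 4/d^2 < m/δ^2 := by
      rw [lt_div_iff₀ (by positivity)]
      nlinarith
    linarith
  -- existence near x
  have hex_x : ∃ z ∈ Metric.closedBall x (1/2), (∀ j, z ≠ ((a j : ℝ) : ℂ)) ∧ F z = x := by
    have hbound : ∀ z ∈ Metric.closedBall x (1/2), ∀ j, (2:ℝ) ≤ ‖z - ((a j : ℝ) : ℂ)‖ := by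
      intro z hz j
      rw [Metric.mem_closedBall, dist_eq_norm] at hz
      have := hlow z (1/2) hz j
      linarith
    have hmapsx : Set.MapsTo (fun z => x - ∑ j, (ε j : ℂ)/(z - ((a j : ℝ) : ℂ)))
        (Metric.closedBall x (1/2)) (Metric.closedBall x (1/2)) := by
      intro z hz
      show x - ∑ j, (ε j : ℂ)/(z - ((a j : ℝ) : ℂ)) ∈ Metric.closedBall x (1/2)
      have hsum2 := hsb z 2 two_pos (hbound z hz)
      rw [Metric.mem_closedBall, dist_eq_norm]
      have he : x - (∑ j, (ε j : ℂ)/(z - ((a j : ℝ) : ℂ))) - x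
          = -(∑ j, (ε j : ℂ)/(z - ((a j : ℝ) : ℂ))) := by ring
      rw [he, norm_neg]
      linarith
    have hlipx : ∀ z ∈ Metric.closedBall x (1/2), ∀ w ∈ Metric.closedBall x (1/2),
        dist (x - ∑ j, (ε j : ℂ)/(z - ((a j : ℝ) : ℂ)))
          (x - ∑ j, (ε j : ℂ)/(w - ((a j : ℝ) : ℂ))) ≤ (1/2) * dist z w := by
      intro z hz w hw
      have hzne : ∀ j, z - ((a j : ℝ) : ℂ) ≠ 0 := fun j => by
        have := hbound z hz j
        intro h
        rw [h, norm_zero] at this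
        linarith
      have hwne : ∀ j, w - ((a j : ℝ) : ℂ) ≠ 0 := fun j => by
        have := hbound w hw j
        intro h
        rw [h, norm_zero] at this
        linarith
      have heq : (x - ∑ j, (ε j : ℂ)/(z - ((a j : ℝ) : ℂ)))
          - (x - ∑ j, (ε j : ℂ)/(w - ((a j : ℝ) : ℂ)))
          = (z - w) * ∑ j, (ε j : ℂ)/((w - ((a j : ℝ) : ℂ))*(z - ((a j : ℝ) : ℂ))) := by
        rw [Finset.mul_sum]
        rw [show (x - ∑ j, (ε j : ℂ)/(z - ((a j : ℝ) : ℂ)))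
          - (x - ∑ j, (ε j : ℂ)/(w - ((a j : ℝ) : ℂ)))
          = ∑ j, ((ε j : ℂ)/(w - ((a j : ℝ) : ℂ)) - (ε j : ℂ)/(z - ((a j : ℝ) : ℂ))) by
            rw [Finset.sum_sub_distrib]; ring]
        refine Finset.sum_congr rfl fun j _ => ?_
        have h1 := hwne j
        have h2 := hzne j
        field_simp
        ring
      rw [dist_eq_norm, dist_eq_norm, heq, norm_mul]
      have := hpb w z 2 two_pos (hbound w hw) (hbound z hz)
      have hn : (0:ℝ) ≤ ‖z - w‖ := norm_nonneg _
      nlinarith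
    obtain ⟨z, hzmem, hzfix0⟩ := aux_fixed _ x (1/2) (by norm_num) hmapsx hlipx
    have hzfix : x - ∑ j, (ε j : ℂ)/(z - ((a j : ℝ) : ℂ)) = z := hzfix0
    refine ⟨z, hzmem, ?_, ?_⟩
    · intro j
      have := hbound z hzmem j
      intro h
      rw [h, sub_self, norm_zero] at this
      linarith
    · rw [hF]
      linear_combination -hzfix
  -- existence near a pole
  have hex_a : ∀ i : Fin k, ∃ z ∈ Metric.closedBall ((a i : ℂ)) (δ/2),
      (∀ j, z ≠ ((a j : ℝ) : ℂ)) ∧ F z = x := by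
    intro i
    set T : ℂ → ℂ := fun z => ∑ j ∈ Finset.univ.erase i, (ε j : ℂ)/(z - ((a j : ℝ) : ℂ))
      with hTdef
    have hgap : ∀ z ∈ Metric.closedBall ((a i : ℂ)) (δ/2), ∀ j, j ≠ i →
        d/2 ≤ ‖z - ((a j : ℝ) : ℂ)‖ := by
      intro z hz j hji
      rw [Metric.mem_closedBall, dist_eq_norm] at hz
      have h1 : dist ((a i : ℂ)) ((a j : ℂ)) ≤ dist ((a i : ℂ)) z + dist z ((a j : ℂ)) :=
        dist_triangle _ _ _
      have h2 := hdle i j (fun h => hji h.symm)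
      rw [dist_eq_norm] at h2
      rw [dist_eq_norm, dist_eq_norm, dist_eq_norm, norm_sub_rev ((a i : ℂ)) z] at h1
      linarith [hδd]
    have hT : ∀ z ∈ Metric.closedBall ((a i : ℂ)) (δ/2), ‖T z‖ ≤ 2/d := by
      intro z hz
      calc ‖T z‖ ≤ ∑ j ∈ Finset.univ.erase i, ‖(ε j : ℂ)/(z - ((a j : ℝ) : ℂ))‖ :=
            norm_sum_le _ _
        _ ≤ ∑ j ∈ Finset.univ.erase i, ε j * (2/d) := by
            apply Finset.sum_le_sum
            intro j hj
            have hji : j ≠ i := Finset.ne_of_mem_erase hj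
            rw [norm_div, hεnorm]
            rw [show ε j * (2/d) = ε j / (d/2) by field_simp]
            exact div_le_div_of_nonneg_left (hε j).le (by positivity) (hgap z hz j hji)
        _ ≤ ∑ j, ε j * (2/d) := by
            apply Finset.sum_le_sum_of_subset_of_nonneg (Finset.subset_univ _)
            intro j _ _
            exact mul_nonneg (hε j).le (by positivity)
        _ = 2/d := by rw [← Finset.sum_mul, hsum, one_mul]
    have hDlow : ∀ z ∈ Metric.closedBall ((a i : ℂ)) (δ/2),
        ‖x‖ - A - δ - 2/d ≤ ‖x - z - T z‖ := by
      intro z hz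
      have hTz := hT z hz
      rw [Metric.mem_closedBall, dist_eq_norm] at hz
      have h1 : ‖x - z‖ - ‖T z‖ ≤ ‖x - z - T z‖ := norm_sub_norm_le _ _
      have h2 : ‖x‖ - ‖z‖ ≤ ‖x - z‖ := norm_sub_norm_le _ _
      have h3 : ‖z‖ ≤ ‖((a i : ℝ) : ℂ)‖ + ‖z - ((a i : ℝ) : ℂ)‖ := by
        have := norm_add_le (((a i : ℝ) : ℂ)) (z - ((a i : ℝ) : ℂ))
        simpa using this
      have := hA i
      linarith
    have hcD : 2/δ ≤ ‖x‖ - A - δ - 2/d ∧ 2 + 4/d^2 ≤ ‖x‖ - A - δ - 2/d := by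
      constructor <;> [skip; skip] <;>
      · have h4 : (0:ℝ) < 4/d^2 := by positivity
        have h2d : (0:ℝ) < 2/d := by positivity
        have h2δ : (0:ℝ) < 2/δ := by positivity
        linarith
    have hDpos : ∀ z ∈ Metric.closedBall ((a i : ℂ)) (δ/2), x - z - T z ≠ 0 := by
      intro z hz
      have := hDlow z hz
      intro h
      rw [h, norm_zero] at this
      have h2δ : (0:ℝ) < 2/δ := by positivity
      linarith [hcD.1]
    have hmapsa : Set.MapsTo (fun z => ((a i : ℝ) : ℂ) + (ε i : ℂ)/(x - z - T z))
        (Metric.closedBall ((a i : ℂ)) (δ/2)) (Metric.closedBall ((a i : ℂ)) (δ/2)) := by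
      intro z hz
      show ((a i : ℝ) : ℂ) + (ε i : ℂ)/(x - z - T z) ∈ Metric.closedBall ((a i : ℂ)) (δ/2)
      have hD := hDlow z hz
      have hDne := hDpos z hz
      rw [Metric.mem_closedBall, dist_eq_norm]
      have he : ((a i : ℝ) : ℂ) + (ε i : ℂ)/(x - z - T z) - ((a i : ℝ) : ℂ)
          = (ε i : ℂ)/(x - z - T z) := by ring
      rw [he, norm_div, hεnorm]
      have hDpos' : (0:ℝ) < ‖x - z - T z‖ := norm_pos_iff.mpr hDne
      have h1 : ε i / ‖x - z - T z‖ ≤ 1 / (2/δ) := by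
        apply div_le_div₀ (by positivity) _ h2δ (le_trans hcD.1 hD)
        linarith [hmle i, hsum ▸ (Finset.single_le_sum (fun j _ => (hε j).le)
          (Finset.mem_univ i))]
      calc ε i / ‖x - z - T z‖ ≤ 1 / (2/δ) := h1
        _ = δ/2 := by field_simp
    have hlipa : ∀ z ∈ Metric.closedBall ((a i : ℂ)) (δ/2),
        ∀ w ∈ Metric.closedBall ((a i : ℂ)) (δ/2),
        dist (((a i : ℝ) : ℂ) + (ε i : ℂ)/(x - z - T z))
          (((a i : ℝ) : ℂ) + (ε i : ℂ)/(x - w - T w)) ≤ (1/2) * dist z w := by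
      intro z hz w hw
      have hDz := hDpos z hz
      have hDw := hDpos w hw
      have hDzl := hDlow z hz
      have hDwl := hDlow w hw
      have hzne : ∀ j, j ≠ i → z - ((a j : ℝ) : ℂ) ≠ 0 := fun j hji => by
        have := hgap z hz j hji
        intro h
        rw [h, norm_zero] at this
        linarith
      have hwne : ∀ j, j ≠ i → w - ((a j : ℝ) : ℂ) ≠ 0 := fun j hji => by
        have := hgap w hw j hji
        intro h
        rw [h, norm_zero] at this
        linarith
      -- T z - T w
      have hTd : T z - T w = (w - z) * ∑ j ∈ Finset.univ.erase i,
          (ε j : ℂ)/((z - ((a j : ℝ) : ℂ))*(w - ((a j : ℝ) : ℂ))) := by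
        rw [hTdef]
        rw [← Finset.sum_sub_distrib, Finset.mul_sum]
        refine Finset.sum_congr rfl fun j hj => ?_
        have hji : j ≠ i := Finset.ne_of_mem_erase hj
        have h1 := hzne j hji
        have h2 := hwne j hji
        field_simp
        ring
      have hTdb : ‖T z - T w‖ ≤ (4/d^2) * ‖z - w‖ := by
        rw [hTd, norm_mul, norm_sub_rev w z]
        have hEb : ‖∑ j ∈ Finset.univ.erase i,
            (ε j : ℂ)/((z - ((a j : ℝ) : ℂ))*(w - ((a j : ℝ) : ℂ)))‖ ≤ 4/d^2 := by
          calc ‖∑ j ∈ Finset.univ.erase i,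
              (ε j : ℂ)/((z - ((a j : ℝ) : ℂ))*(w - ((a j : ℝ) : ℂ)))‖
              ≤ ∑ j ∈ Finset.univ.erase i,
                ‖(ε j : ℂ)/((z - ((a j : ℝ) : ℂ))*(w - ((a j : ℝ) : ℂ)))‖ := norm_sum_le _ _
            _ ≤ ∑ j ∈ Finset.univ.erase i, ε j * (4/d^2) := by
                apply Finset.sum_le_sum
                intro j hj
                have hji : j ≠ i := Finset.ne_of_mem_erase hj
                rw [norm_div, hεnorm, norm_mul]
                rw [show ε j * (4/d^2) = ε j / (d/2 * (d/2)) by field_simp; ring]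
                apply div_le_div_of_nonneg_left (hε j).le (by positivity)
                exact mul_le_mul (hgap z hz j hji) (hgap w hw j hji) (by positivity)
                  (norm_nonneg _)
            _ ≤ ∑ j, ε j * (4/d^2) := by
                apply Finset.sum_le_sum_of_subset_of_nonneg (Finset.subset_univ _)
                intro j _ _
                exact mul_nonneg (hε j).le (by positivity)
            _ = 4/d^2 := by rw [← Finset.sum_mul, hsum, one_mul]
        have := norm_nonneg (z - w)
        nlinarith
      -- difference of f
      have hfd : ((a i : ℝ) : ℂ) + (ε i : ℂ)/(x - z - T z)
          - (((a i : ℝ) : ℂ) + (ε i : ℂ)/(x - w - T w))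
          = ((x - w - T w) - (x - z - T z)) *
            ((ε i : ℂ)/((x - z - T z)*(x - w - T w))) := by
        field_simp [hDz, hDw]
        ring
      rw [dist_eq_norm, dist_eq_norm, hfd, norm_mul]
      have hnum : ‖(x - w - T w) - (x - z - T z)‖ ≤ (1 + 4/d^2) * ‖z - w‖ := by
        have h1 : (x - w - T w) - (x - z - T z) = (z - w) + (T z - T w) := by ring
        rw [h1]
        calc ‖(z - w) + (T z - T w)‖ ≤ ‖z - w‖ + ‖T z - T w‖ := norm_add_le _ _
          _ ≤ ‖z - w‖ + (4/d^2) * ‖z - w‖ := by linarith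
          _ = (1 + 4/d^2) * ‖z - w‖ := by ring
      have hden : ‖(ε i : ℂ)/((x - z - T z)*(x - w - T w))‖ ≤ 1/(2 + 4/d^2)^2 := by
        rw [norm_div, hεnorm, norm_mul]
        apply div_le_div₀ (by positivity) _ (by positivity) _
        · linarith [hmle i, hsum ▸ (Finset.single_le_sum (fun j _ => (hε j).le)
            (Finset.mem_univ i))]
        · have h1 := le_trans hcD.2 hDzl
          have h2 := le_trans hcD.2 hDwl
          have h3 : (0:ℝ) < 2 + 4/d^2 := by positivity
          nlinarith
      have hnn : (0:ℝ) ≤ ‖z - w‖ := norm_nonneg _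
      have hnn2 : (0:ℝ) ≤ ‖(x - w - T w) - (x - z - T z)‖ := norm_nonneg _
      have hd4 : (0:ℝ) < 4/d^2 := by positivity
      have hkey : (1 + 4/d^2) / (2 + 4/d^2)^2 ≤ 1/2 := by
        rw [div_le_div_iff₀ (by positivity) (by norm_num)]
        nlinarith
      calc ‖(x - w - T w) - (x - z - T z)‖ * ‖(ε i : ℂ)/((x - z - T z)*(x - w - T w))‖
          ≤ ((1 + 4/d^2) * ‖z - w‖) * (1/(2 + 4/d^2)^2) := by
            apply mul_le_mul hnum hden (norm_nonneg _) (by positivity)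
        _ = ((1 + 4/d^2) / (2 + 4/d^2)^2) * ‖z - w‖ := by ring
        _ ≤ (1/2) * ‖z - w‖ := by nlinarith
    obtain ⟨z, hzmem, hzfix0⟩ := aux_fixed _ ((a i : ℂ)) (δ/2) (by positivity) hmapsa hlipa
    have hzfix : ((a i : ℝ) : ℂ) + (ε i : ℂ)/(x - z - T z) = z := hzfix0
    refine ⟨z, hzmem, ?_, ?_⟩
    · have hzi : z - ((a i : ℝ) : ℂ) = (ε i : ℂ)/(x - z - T z) := by
        linear_combination -hzfix
      have hzine : z ≠ ((a i : ℝ) : ℂ) := by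
        apply sub_ne_zero.mp
        rw [hzi]
        exact div_ne_zero (Complex.ofReal_ne_zero.mpr (hε i).ne') (hDpos z hzmem)
      intro j
      by_cases hji : j = i
      · rw [hji]; exact hzine
      · have := hgap z hzmem j hji
        intro h
        rw [h, sub_self, norm_zero] at this
        linarith
    · have hzi : z - ((a i : ℝ) : ℂ) = (ε i : ℂ)/(x - z - T z) := by
        linear_combination -hzfix
      have hDne := hDpos z hzmem
      have hεne : (ε i : ℂ) ≠ 0 := Complex.ofReal_ne_zero.mpr (hε i).ne'
      have hzine : z - ((a i : ℝ) : ℂ) ≠ 0 := by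
        rw [hzi]
        exact div_ne_zero hεne hDne
      have hi : (ε i : ℂ)/(z - ((a i : ℝ) : ℂ)) = x - z - T z := by
        rw [hzi]
        field_simp
      rw [hF]
      rw [← Finset.add_sum_erase _ _ (Finset.mem_univ i), hi]
      ring
  -- packaging
  have hEU_a : ∀ i : Fin k, ∃! z : ℂ,
      z ∈ Metric.ball ((a i : ℂ)) δ ∧ (∀ j, z ≠ ((a j : ℝ) : ℂ)) ∧ F z = x := by
    intro i
    obtain ⟨z, hzmem, hzne, hzF⟩ := hex_a i
    have hzball : z ∈ Metric.ball ((a i : ℂ)) δ := by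
      rw [Metric.mem_closedBall] at hzmem
      rw [Metric.mem_ball]
      linarith
    refine ⟨z, ⟨hzball, hzne, hzF⟩, ?_⟩
    rintro w ⟨hwball, hwne, hwF⟩
    exact huniq_a i w z hwball hzball hwne hzne hwF hzF
  have hEU_x : ∃! z : ℂ, z ∈ Metric.ball x 1 ∧ (∀ j, z ≠ ((a j : ℝ) : ℂ)) ∧ F z = x := by
    obtain ⟨z, hzmem, hzne, hzF⟩ := hex_x
    have hzball : z ∈ Metric.ball x 1 := by
      rw [Metric.mem_closedBall] at hzmem
      rw [Metric.mem_ball]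
      linarith
    refine ⟨z, ⟨hzball, hzne, hzF⟩, ?_⟩
    rintro w ⟨hwball, hwne, hwF⟩
    exact huniq_x w z hwball hzball hwne hzne hwF hzF
  have hdisjx : ∀ i : Fin k, Disjoint (Metric.ball x 1) (Metric.ball ((a i : ℂ)) δ) := by
    intro i
    apply Metric.ball_disjoint_ball
    rw [dist_eq_norm]
    have h1 : ‖x‖ - ‖((a i : ℝ) : ℂ)‖ ≤ ‖x - ((a i : ℝ) : ℂ)‖ := norm_sub_norm_le _ _
    have := hA i
    have h2δ : (0:ℝ) < 2/δ := by positivity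
    have h2d : (0:ℝ) < 2/d := by positivity
    have h4 : (0:ℝ) < 4/d^2 := by positivity
    linarith
  have hcov : {z : ℂ | (∀ j, z ≠ ((a j : ℝ) : ℂ)) ∧ F z = x} ⊆
      Metric.ball x 1 ∪ ⋃ i : Fin k, Metric.ball ((a i : ℂ)) δ := by
    rintro z ⟨hzne, hzF⟩
    by_cases hz : ∃ i, z ∈ Metric.ball ((a i : ℂ)) δ
    · right
      exact Set.mem_iUnion.mpr hz
    · left
      push_neg at hz
      have hb : ∀ j, δ ≤ ‖z - ((a j : ℝ) : ℂ)‖ := by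
        intro j
        have := hz j
        rw [Metric.mem_ball, dist_eq_norm] at this
        linarith [not_lt.mp this]
      have he : z - x = -(∑ j, (ε j : ℂ)/(z - ((a j : ℝ) : ℂ))) := by
        have h := (hF z).symm.trans hzF
        linear_combination h
      have h1 : ‖z - x‖ ≤ 1/δ := by
        rw [he, norm_neg]
        exact hsb z δ hδ hb
      have hb2 : ∀ j, (2:ℝ) ≤ ‖z - ((a j : ℝ) : ℂ)‖ := by
        intro j
        have := hlow z (1/δ) h1 j
        linarith
      have h2 : ‖z - x‖ ≤ 1/2 := by
        rw [he, norm_neg]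
        exact hsb z 2 two_pos hb2
      rw [Metric.mem_ball, dist_eq_norm]
      linarith
  refine ⟨hEU_a, hEU_x, hdisjx, hcov, ?_⟩
  -- counting
  obtain ⟨zs, hzsP, hzsU⟩ := hEU_x
  choose g hgP hgU using hEU_a
  have hset : {z : ℂ | (∀ j, z ≠ ((a j : ℝ) : ℂ)) ∧ F z = x} = insert zs (Set.range g) := by
    ext z
    simp only [Set.mem_setOf_eq, Set.mem_insert_iff, Set.mem_range]
    constructor
    · rintro ⟨h1, h2⟩
      rcases hcov ⟨h1, h2⟩ with hz | hz
      · left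
        exact hzsU z ⟨hz, h1, h2⟩
      · right
        obtain ⟨i, hzi⟩ := Set.mem_iUnion.mp hz
        exact ⟨i, (hgU i z ⟨hzi, h1, h2⟩).symm⟩
    · rintro (rfl | ⟨i, rfl⟩)
      · exact hzsP.2
      · exact (hgP i).2
  have hginj : Function.Injective g := by
    intro i j hgij
    by_contra hne
    exact (hABd i j hne).ne_of_mem (hgP i).1 (hgP j).1 hgij
  have hzs_not : zs ∉ Set.range g := by
    rintro ⟨i, rfl⟩
    exact (hdisjx i).ne_of_mem hzsP.1 (hgP i).1 rfl
  rw [hset, Set.ncard_insert_of_notMem hzs_not (Set.finite_range g)]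
  have hcard : (Set.range g).ncard = k := by
    rw [← Nat.card_coe_set_eq, Nat.card_range_of_injective hginj,
      Nat.card_eq_fintype_card, Fintype.card_fin]
  rw [hcard]
end

section
/- Let k ≥ 1 be an integer, a_1 < … < a_k distinct real numbers, and ε_1, …, ε_k positive reals with ε_1 + … + ε_k = 1. For s > 0 consider the scaled external eigenvalues s·a_1, …, s·a_k and the branch-point equation ∑_{j=1}^k ε_j/(z − s·a_j)² = 1. Then there exists s_0 > 0 such that for every s > s_0 this equation has exactly 2k solutions in ℂ, all of them real and distinct, say z_1(s) < z_2(s) < … < z_{2k}(s), and they interlace the scaled eigenvalues: z_{2i−1}(s) < s·a_i < z_{2i}(s) for each i = 1, …, k. Moreover, as s → ∞, z_{2i−1}(s) − s·a_i → −√ε_i and z_{2i}(s) − s·a_i → √ε_i. -/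
open Filter

open Finset


open Polynomial Finset in
lemma poly_aux {k : ℕ} (hk : 0 < k) (b e : Fin k → ℂ) :
    ∃ P : ℂ[X], P.Monic ∧ P.natDegree = 2 * k ∧
      ∀ w : ℂ, (∀ j, w ≠ b j) →
        (P.eval w = 0 ↔ ∑ j, e j / (w - b j) ^ 2 = 1) := by
  set Q : ℂ[X] := ∏ j, (X - C (b j)) ^ 2 with hQ
  set R : ℂ[X] := ∑ j, C (e j) * ∏ l ∈ Finset.univ.erase j, (X - C (b l)) ^ 2 with hR
  have hQm : Q.Monic := monic_prod_of_monic _ _ fun j _ => (monic_X_sub_C _).pow 2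
  have hQd : Q.natDegree = 2 * k := by
    rw [hQ, natDegree_prod_of_monic _ _ fun j _ => (monic_X_sub_C _).pow 2]
    simp [natDegree_pow, natDegree_X_sub_C, mul_comm]
  have hRd : R.natDegree ≤ 2 * k - 2 := by
    apply natDegree_sum_le_of_forall_le
    intro j _
    refine (natDegree_mul_le).trans ?_
    have : (∏ l ∈ Finset.univ.erase j, (X - C (b l)) ^ 2).natDegree ≤ 2 * k - 2 := by
      refine (natDegree_prod_le _ _).trans ?_
      have : ∀ l ∈ Finset.univ.erase j, ((X - C (b l)) ^ 2).natDegree ≤ 2 := by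
        intro l _
        simp [natDegree_pow, natDegree_X_sub_C]
      refine le_trans (Finset.sum_le_sum this) ?_
      rw [Finset.sum_const, Finset.card_erase_of_mem (Finset.mem_univ j),
        smul_eq_mul, Finset.card_univ, Fintype.card_fin]
      omega
    simpa using this
  have hdeglt : R.degree < Q.degree := by
    have h1 : R.degree ≤ (2 * k - 2 : ℕ) := degree_le_natDegree.trans (by exact_mod_cast Nat.cast_le.mpr hRd)
    have h2 : Q.degree = (2 * k : ℕ) := by rw [degree_eq_natDegree hQm.ne_zero, hQd]
    rw [h2]
    exact lt_of_le_of_lt h1 (Nat.cast_lt.mpr (by omega))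
  refine ⟨Q - R, ?_, ?_, ?_⟩
  · exact hQm.sub_of_left hdeglt
  · have := degree_sub_eq_left_of_degree_lt hdeglt
    rw [← hQd]
    exact natDegree_eq_of_degree_eq (by rw [this])
  · intro w hw
    have hd : ∀ j : Fin k, (w - b j) ^ 2 ≠ 0 := fun j => pow_ne_zero _ (sub_ne_zero.2 (hw j))
    have hprod : (∏ j, (w - b j) ^ 2) ≠ 0 := Finset.prod_ne_zero_iff.2 fun j _ => hd j
    have hev : (Q - R).eval w = ∏ j, (w - b j) ^ 2 - ∑ j, e j * ∏ l ∈ Finset.univ.erase j, (w - b l) ^ 2 := by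
      simp [hQ, hR, eval_prod, eval_finset_sum]
    have hkey : ∀ j : Fin k, e j * ∏ l ∈ Finset.univ.erase j, (w - b l) ^ 2
        = (e j / (w - b j) ^ 2) * ∏ l, (w - b l) ^ 2 := by
      intro j
      rw [← Finset.mul_prod_erase _ _ (Finset.mem_univ j), ← mul_assoc, div_mul_cancel₀ _ (hd j)]
    have hsum : ∑ j, e j * ∏ l ∈ Finset.univ.erase j, (w - b l) ^ 2
        = (∑ j, e j / (w - b j) ^ 2) * ∏ l, (w - b l) ^ 2 := by
      rw [Finset.sum_mul]; exact Finset.sum_congr rfl fun j _ => hkey j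
    rw [hev, sub_eq_zero, hsum]
    constructor
    · intro h
      exact mul_right_cancel₀ hprod (by rw [← h, one_mul])
    · intro h
      rw [h, one_mul]


lemma roots_aux {n : ℕ} (P : Polynomial ℂ) (hm : P.Monic) (hd : P.natDegree = n)
    (g : Fin n → ℂ) (hg : Function.Injective g) (hz : ∀ m, P.eval (g m) = 0) :
    ∀ w, P.eval w = 0 → ∃ m, w = g m := by
  have hP0 : P ≠ 0 := hm.ne_zero
  set F := Finset.image g Finset.univ with hF
  have hcard : F.card = n := by
    rw [hF, Finset.card_image_of_injective _ hg, Finset.card_univ, Fintype.card_fin]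
  have hsub : F ⊆ P.roots.toFinset := by
    intro x hx
    rw [hF, Finset.mem_image] at hx
    obtain ⟨m, -, rfl⟩ := hx
    rw [Multiset.mem_toFinset, Polynomial.mem_roots hP0]
    exact hz m
  have hle : P.roots.toFinset.card ≤ n := by
    refine le_trans (Multiset.toFinset_card_le _) ?_
    rw [← hd]
    exact_mod_cast P.card_roots' 
  have heq : F = P.roots.toFinset := Finset.eq_of_subset_of_card_le hsub (by omega)
  intro w hw
  have : w ∈ P.roots.toFinset := by
    rw [Multiset.mem_toFinset, Polynomial.mem_roots hP0]; exact hw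
  rw [← heq, hF, Finset.mem_image] at this
  obtain ⟨m, -, hm'⟩ := this
  exact ⟨m, hm'.symm⟩



-- sum of off-terms is small near b i
lemma off_bound {k : ℕ} (a ε : Fin k → ℝ) (hε : ∀ i, 0 < ε i) (hsum : ∑ i, ε i = 1)
    (δ : ℝ) (hδ : 0 < δ) (hδa : ∀ i j, i ≠ j → δ ≤ |a i - a j|)
    (s : ℝ) (hs0 : 0 < s) (hsδ : 10 < s * δ) (i : Fin k) (x : ℝ) (hx : |x - s * a i| ≤ 2) :
    ∑ j ∈ Finset.univ.erase i, ε j / (x - s * a j) ^ 2 ≤ 1 / (s * δ - 2) ^ 2 := by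
  have h8 : (8 : ℝ) ≤ s * δ - 2 := by linarith
  have key : ∀ j ∈ Finset.univ.erase i, ε j / (x - s * a j) ^ 2 ≤ ε j / (s * δ - 2) ^ 2 := by
    intro j hj
    have hji : j ≠ i := (Finset.mem_erase.1 hj).1
    have hdist : s * δ ≤ |s * a i - s * a j| := by
      rw [← mul_sub, abs_mul, abs_of_pos hs0]
      exact mul_le_mul_of_nonneg_left (hδa i j (Ne.symm hji)) hs0.le
    have h1 : s * δ - 2 ≤ |x - s * a j| := by
      have := abs_sub_abs_le_abs_sub (s * a i - s * a j) (s * a i - x)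
      have h2 : |s * a i - x| = |x - s * a i| := abs_sub_comm _ _
      have h3 : s * a i - s * a j - (s * a i - x) = x - s * a j := by ring
      rw [h3, h2] at this
      linarith
    have hsq : (s * δ - 2) ^ 2 ≤ (x - s * a j) ^ 2 := by
      rw [← sq_abs (x - s * a j)]
      exact pow_le_pow_left₀ (by linarith) h1 2
    gcongr
    exact (hε j).le
  calc ∑ j ∈ Finset.univ.erase i, ε j / (x - s * a j) ^ 2
      ≤ ∑ j ∈ Finset.univ.erase i, ε j / (s * δ - 2) ^ 2 := Finset.sum_le_sum key
    _ = (∑ j ∈ Finset.univ.erase i, ε j) / (s * δ - 2) ^ 2 := by rw [Finset.sum_div]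
    _ ≤ 1 / (s * δ - 2) ^ 2 := by
        gcongr
        rw [← hsum]
        exact Finset.sum_le_sum_of_subset_of_nonneg (Finset.subset_univ _)
          (fun j _ _ => (hε j).le)

-- each ε i ≤ 1
lemma eps_le_one {k : ℕ} (ε : Fin k → ℝ) (hε : ∀ i, 0 < ε i) (hsum : ∑ i, ε i = 1)
    (i : Fin k) : ε i ≤ 1 := by
  rw [← hsum]
  exact Finset.single_le_sum (fun j _ => (hε j).le) (Finset.mem_univ i)

-- f is big near b i
lemma one_lt_f {k : ℕ} (a ε : Fin k → ℝ) (hε : ∀ i, 0 < ε i)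
    (s : ℝ) (i : Fin k) (x : ℝ) (hne : x ≠ s * a i) (hx : |x - s * a i| < Real.sqrt (ε i)) :
    1 < ∑ j, ε j / (x - s * a j) ^ 2 := by
  have h1 : (x - s * a i) ^ 2 < ε i := by
    rw [← sq_abs]
    calc |x - s * a i| ^ 2 < Real.sqrt (ε i) ^ 2 :=
          pow_lt_pow_left₀ hx (abs_nonneg _) (by norm_num)
      _ = ε i := Real.sq_sqrt (hε i).le
  have h0 : 0 < (x - s * a i) ^ 2 :=
    lt_of_le_of_ne (sq_nonneg _) (Ne.symm (pow_ne_zero 2 (sub_ne_zero.2 hne)))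
  have hterm : 1 < ε i / (x - s * a i) ^ 2 := (one_lt_div h0).2 h1
  refine lt_of_lt_of_le hterm ?_
  exact Finset.single_le_sum (f := fun j => ε j / (x - s * a j) ^ 2)
    (fun j _ => div_nonneg (hε j).le (sq_nonneg _)) (Finset.mem_univ i)

-- f is small far away from all b j
lemma f_small_far {k : ℕ} (a ε : Fin k → ℝ) (hε : ∀ i, 0 < ε i) (hsum : ∑ i, ε i = 1)
    (s : ℝ) (x : ℝ) (hx : ∀ j, 2 ≤ |x - s * a j|) :
    ∑ j, ε j / (x - s * a j) ^ 2 ≤ 1 / 4 := by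
  have key : ∀ j ∈ Finset.univ, ε j / (x - s * a j) ^ 2 ≤ ε j / 4 := by
    intro j _
    have : (4 : ℝ) ≤ (x - s * a j) ^ 2 := by
      rw [← sq_abs]
      calc (4:ℝ) = 2 ^ 2 := by norm_num
        _ ≤ |x - s * a j| ^ 2 := pow_le_pow_left₀ (by norm_num) (hx j) 2
    gcongr
    exact (hε j).le
  calc ∑ j, ε j / (x - s * a j) ^ 2 ≤ ∑ j, ε j / 4 := Finset.sum_le_sum key
    _ = 1 / 4 := by rw [← Finset.sum_div, hsum]

-- continuity
lemma f_contOn {k : ℕ} (a ε : Fin k → ℝ) (s : ℝ) (A : Set ℝ)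
    (hA : ∀ x ∈ A, ∀ j, x - s * a j ≠ 0) :
    ContinuousOn (fun x => ∑ j, ε j / (x - s * a j) ^ 2) A := by
  apply continuousOn_finset_sum
  intro j _
  apply ContinuousOn.div continuousOn_const
  · exact ((continuous_id.sub continuous_const).pow 2).continuousOn
  · intro x hx
    exact pow_ne_zero _ (hA x hx j)

-- assume p3 lemmas available: off_bound, eps_le_one, one_lt_f, f_small_far, f_contOn


lemma bdist {k : ℕ} (a : Fin k → ℝ) (δ : ℝ) (hδa : ∀ i j, i ≠ j → δ ≤ |a i - a j|)
    (s : ℝ) (hs0 : 0 < s) : ∀ i j, i ≠ j → s * δ ≤ |s * a i - s * a j| := by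
  intro i j hij
  rw [← mul_sub, abs_mul, abs_of_pos hs0]
  exact mul_le_mul_of_nonneg_left (hδa i j hij) hs0.le

lemma ne_poles {k : ℕ} (a : Fin k → ℝ) (δ : ℝ) (hδa : ∀ i j, i ≠ j → δ ≤ |a i - a j|)
    (s : ℝ) (hs0 : 0 < s) (hsδ : 10 < s * δ) (i : Fin k) (x : ℝ)
    (hx : |x - s * a i| ≤ 2) (hxi : x ≠ s * a i) : ∀ j, x ≠ s * a j := by
  intro j hxj
  by_cases hj : j = i
  · exact hxi (hj ▸ hxj)
  · have h1 := bdist a δ hδa s hs0 j i hj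
    rw [← hxj] at h1
    linarith [abs_sub_abs_le_abs_sub (x - s * a i) (x - s * a i), hx, h1]

section
variable {k : ℕ} (a ε : Fin k → ℝ)

-- endpoint estimate
lemma f_end (hε : ∀ i, 0 < ε i) (hsum : ∑ i, ε i = 1)
    (δ : ℝ) (hδ : 0 < δ) (hδa : ∀ i j, i ≠ j → δ ≤ |a i - a j|)
    (s : ℝ) (hs0 : 0 < s) (hsδ : 10 < s * δ) (i : Fin k) (x : ℝ) (hx : |x - s * a i| = 2) :
    ∑ j, ε j / (x - s * a j) ^ 2 < 1 := by
  have hsq : (x - s * a i) ^ 2 = 4 := by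
    rw [← sq_abs, hx]; norm_num
  have hterm : ε i / (x - s * a i) ^ 2 ≤ 1 / 4 := by
    rw [hsq]
    have := eps_le_one ε hε hsum i
    linarith
  have hoff := off_bound a ε hε hsum δ hδ hδa s hs0 hsδ i x (le_of_eq hx)
  have h64 : (64 : ℝ) ≤ (s * δ - 2) ^ 2 := by nlinarith
  have hoff2 : (1 : ℝ) / (s * δ - 2) ^ 2 ≤ 1 / 64 := by
    gcongr
  rw [← Finset.add_sum_erase _ _ (Finset.mem_univ i)]
  linarith

-- cast lemma
lemma cast_sum (s x : ℝ) :
    ∑ j, (ε j : ℂ) / ((x : ℂ) - (s : ℂ) * (a j : ℂ)) ^ 2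
      = ((∑ j, ε j / (x - s * a j) ^ 2 : ℝ) : ℂ) := by
  push_cast
  ring


lemma exists_delta (ha : StrictMono a) :
    ∃ δ > 0, ∀ i j, i ≠ j → δ ≤ |a i - a j| := by
  by_cases h : (Finset.univ.offDiag : Finset (Fin k × Fin k)).Nonempty
  · obtain ⟨p, hp, hmin⟩ := Finset.exists_min_image Finset.univ.offDiag
      (fun p => |a p.1 - a p.2|) h
    have hp' := Finset.mem_offDiag.1 hp
    refine ⟨|a p.1 - a p.2|, ?_, ?_⟩
    · rw [gt_iff_lt, abs_pos, sub_ne_zero]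
      exact fun hEq => hp'.2.2 (ha.injective hEq)
    · intro i j hij
      exact hmin (i, j) (Finset.mem_offDiag.2 ⟨Finset.mem_univ _, Finset.mem_univ _, hij⟩)
  · refine ⟨1, one_pos, fun i j hij => absurd ?_ h⟩
    exact ⟨(i, j), Finset.mem_offDiag.2 ⟨Finset.mem_univ _, Finset.mem_univ _, hij⟩⟩

lemma gap_lemma (ha : StrictMono a) (δ : ℝ) (hδa : ∀ i j, i ≠ j → δ ≤ |a i - a j|)
    (s : ℝ) (hs0 : 0 < s) (hsδ : 10 < s * δ) :
    ∀ i j : Fin k, i < j → s * a i + 10 < s * a j := by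
  intro i j hij
  have h1 := bdist a δ hδa s hs0 i j (Fin.ne_of_lt hij)
  have h2 : s * a i < s * a j := by
    have := ha hij
    nlinarith
  rw [abs_of_neg (by linarith)] at h1
  linarith

lemma unique_root (ha : StrictMono a) (hε : ∀ i, 0 < ε i) (hsum : ∑ i, ε i = 1)
    (δ : ℝ) (hδ : 0 < δ) (hδa : ∀ i j, i ≠ j → δ ≤ |a i - a j|)
    (s : ℝ) (hs0 : 0 < s) (hsδ : 10 < s * δ)
    (Z : Fin (2 * k) → ℝ)
    (hmemL : ∀ i : Fin k, ∀ m : Fin (2 * k), m.val = 2 * i.val →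
      Z m ∈ Set.Ioo (s * a i - 2) (s * a i - Real.sqrt (ε i) / 2))
    (hmemR : ∀ i : Fin k, ∀ m : Fin (2 * k), m.val = 2 * i.val + 1 →
      Z m ∈ Set.Ioo (s * a i + Real.sqrt (ε i) / 2) (s * a i + 2))
    (hset : {w : ℂ | (∀ j, w ≠ (s : ℂ) * (a j : ℂ)) ∧
        ∑ j, (ε j : ℂ) / (w - (s : ℂ) * (a j : ℂ)) ^ 2 = 1}
      = Set.range fun m : Fin (2 * k) => ((Z m : ℝ) : ℂ))
    (i : Fin k) (c : ℝ) (hcb : |c - s * a i| < 2) (hc0 : c ≠ s * a i)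
    (hfc : (∑ j, ε j / (c - s * a j) ^ 2) = 1) :
    ∃ m : Fin (2 * k), Z m = c ∧
      ((c < s * a i → m.val = 2 * i.val) ∧ (s * a i < c → m.val = 2 * i.val + 1)) := by
  have hgap := gap_lemma a ha δ hδa s hs0 hsδ
  have hcb' : s * a i - 2 < c ∧ c < s * a i + 2 := abs_lt.1 hcb |>.imp (by intro h; linarith) (by intro h; linarith)
  have hc1 : ∀ j, c ≠ s * a j := ne_poles a δ hδa s hs0 hsδ i c hcb.le hc0
  have hcC : ∀ j, ((c : ℝ) : ℂ) ≠ (s : ℂ) * (a j : ℂ) := by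
    intro j h
    apply hc1 j
    have h2 : ((s * a j : ℝ) : ℂ) = (s : ℂ) * (a j : ℂ) := by push_cast; ring
    rw [← h2] at h
    exact_mod_cast h
  have hsumC : ∑ j, (ε j : ℂ) / (((c : ℝ) : ℂ) - (s : ℂ) * (a j : ℂ)) ^ 2 = 1 := by
    rw [cast_sum a ε s c, hfc]
    norm_num
  have hmem : ((c : ℝ) : ℂ) ∈ {w : ℂ | (∀ j, w ≠ (s : ℂ) * (a j : ℂ)) ∧
      ∑ j, (ε j : ℂ) / (w - (s : ℂ) * (a j : ℂ)) ^ 2 = 1} := ⟨hcC, hsumC⟩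
  rw [hset] at hmem
  obtain ⟨m, hm⟩ := hmem
  simp only at hm
  have hmz : Z m = c := by exact_mod_cast hm
  refine ⟨m, hmz, ?_, ?_⟩
  · intro hlt
    by_cases hm2 : m.val % 2 = 0
    · have h1 := hmemL ⟨m.val / 2, by omega⟩ m (by simp; omega)
      rw [hmz] at h1
      have hii : (⟨m.val / 2, by omega⟩ : Fin k) = i := by
        rcases lt_trichotomy (⟨m.val / 2, by omega⟩ : Fin k) i with h | h | h
        · exfalso
          have hg := hgap _ _ h
          have hsp := Real.sqrt_pos.2 (hε (⟨m.val / 2, by omega⟩ : Fin k))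
          linarith [h1.2, hcb'.1]
        · exact h
        · exfalso
          have hg := hgap _ _ h
          linarith [h1.1, hcb'.2]
      have := congrArg Fin.val hii
      simp at this
      omega
    · exfalso
      have h1 := hmemR ⟨m.val / 2, by omega⟩ m (by simp; omega)
      rw [hmz] at h1
      rcases lt_trichotomy (⟨m.val / 2, by omega⟩ : Fin k) i with h | h | h
      · have hg := hgap _ _ h
        linarith [h1.2, hcb'.1]
      · rw [h] at h1
        have hsp := Real.sqrt_pos.2 (hε i)
        linarith [h1.1]
      · have hg := hgap _ _ h
        have hsp := Real.sqrt_pos.2 (hε (⟨m.val / 2, by omega⟩ : Fin k))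
        linarith [h1.1, hcb'.2]
  · intro hlt
    by_cases hm2 : m.val % 2 = 0
    · exfalso
      have h1 := hmemL ⟨m.val / 2, by omega⟩ m (by simp; omega)
      rw [hmz] at h1
      rcases lt_trichotomy (⟨m.val / 2, by omega⟩ : Fin k) i with h | h | h
      · have hg := hgap _ _ h
        have hsp := Real.sqrt_pos.2 (hε (⟨m.val / 2, by omega⟩ : Fin k))
        linarith [h1.2, hcb'.1]
      · rw [h] at h1
        have hsp := Real.sqrt_pos.2 (hε i)
        linarith [h1.2]
      · have hg := hgap _ _ h
        linarith [h1.1, hcb'.2]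
    · have h1 := hmemR ⟨m.val / 2, by omega⟩ m (by simp; omega)
      rw [hmz] at h1
      have hii : (⟨m.val / 2, by omega⟩ : Fin k) = i := by
        rcases lt_trichotomy (⟨m.val / 2, by omega⟩ : Fin k) i with h | h | h
        · exfalso
          have hg := hgap _ _ h
          linarith [h1.2, hcb'.1]
        · exact h
        · exfalso
          have hg := hgap _ _ h
          have hsp := Real.sqrt_pos.2 (hε (⟨m.val / 2, by omega⟩ : Fin k))
          linarith [h1.1, hcb'.2]
      have := congrArg Fin.val hii
      simp at this
      omega

end

section
variable {k : ℕ}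

lemma main_lemma (hk : 0 < k) (a ε : Fin k → ℝ) (ha : StrictMono a)
    (hε : ∀ i, 0 < ε i) (hsum : ∑ i, ε i = 1)
    (δ : ℝ) (hδ : 0 < δ) (hδa : ∀ i j, i ≠ j → δ ≤ |a i - a j|)
    (s : ℝ) (hs0 : 0 < s) (hsδ : 10 < s * δ) :
    ∃ z : Fin (2 * k) → ℝ,
      (∀ i : Fin k, ∀ m : Fin (2 * k), m.val = 2 * i.val →
        z m ∈ Set.Ioo (s * a i - 2) (s * a i - Real.sqrt (ε i) / 2)) ∧
      (∀ i : Fin k, ∀ m : Fin (2 * k), m.val = 2 * i.val + 1 →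
        z m ∈ Set.Ioo (s * a i + Real.sqrt (ε i) / 2) (s * a i + 2)) ∧
      StrictMono z ∧
      ({w : ℂ | (∀ j, w ≠ (s : ℂ) * (a j : ℂ)) ∧
          ∑ j, (ε j : ℂ) / (w - (s : ℂ) * (a j : ℂ)) ^ 2 = 1}
        = Set.range fun m : Fin (2 * k) => ((z m : ℝ) : ℂ)) := by
  have hsqpos : ∀ i : Fin k, 0 < Real.sqrt (ε i) := fun i => Real.sqrt_pos.2 (hε i)
  have hsqle : ∀ i : Fin k, Real.sqrt (ε i) ≤ 1 := fun i => by
    rw [show (1:ℝ) = Real.sqrt 1 by simp]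
    exact Real.sqrt_le_sqrt (eps_le_one ε hε hsum i)
  have hgap : ∀ i j : Fin k, i < j → s * a i + 10 < s * a j := by
    intro i j hij
    have h1 := bdist a δ hδa s hs0 i j (Fin.ne_of_lt hij)
    have h2 : s * a i < s * a j := by
      have := ha hij
      nlinarith
    rw [abs_of_neg (by linarith)] at h1
    linarith
  -- IVT for the left root
  have hL : ∀ i : Fin k, ∃ c, c ∈ Set.Ioo (s * a i - 2) (s * a i - Real.sqrt (ε i) / 2) ∧
      (∑ j, ε j / (c - s * a j) ^ 2) = 1 := by
    intro i
    have hsp := hsqpos i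
    have hsl := hsqle i
    have hlh : s * a i - 2 ≤ s * a i - Real.sqrt (ε i) / 2 := by linarith
    have hcont : ContinuousOn (fun x => ∑ j, ε j / (x - s * a j) ^ 2)
        (Set.Icc (s * a i - 2) (s * a i - Real.sqrt (ε i) / 2)) := by
      apply f_contOn
      intro x hx j
      rw [sub_ne_zero]
      refine ne_poles a δ hδa s hs0 hsδ i x ?_ ?_ j
      · rw [abs_le]; exact ⟨by linarith [hx.1], by linarith [hx.2]⟩
      · intro h; rw [h] at hx; linarith [hx.2]
    have hflo : (∑ j, ε j / ((s * a i - 2) - s * a j) ^ 2) < 1 := by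
      apply f_end a ε hε hsum δ hδ hδa s hs0 hsδ i
      rw [abs_of_nonpos (by linarith)]; ring
    have hfhi : 1 < ∑ j, ε j / ((s * a i - Real.sqrt (ε i) / 2) - s * a j) ^ 2 := by
      apply one_lt_f a ε hε s i
      · intro h; linarith [h]
      · rw [show s * a i - Real.sqrt (ε i) / 2 - s * a i = -(Real.sqrt (ε i) / 2) by ring,
          abs_neg, abs_of_nonneg (by linarith)]
        linarith
    have h1 : (1:ℝ) ∈ Set.Ioo (∑ j, ε j / ((s * a i - 2) - s * a j) ^ 2)
        (∑ j, ε j / ((s * a i - Real.sqrt (ε i) / 2) - s * a j) ^ 2) := ⟨hflo, hfhi⟩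
    obtain ⟨c, hc, hfc⟩ := intermediate_value_Ioo hlh hcont h1
    exact ⟨c, hc, hfc⟩
  -- IVT for the right root
  have hR : ∀ i : Fin k, ∃ c, c ∈ Set.Ioo (s * a i + Real.sqrt (ε i) / 2) (s * a i + 2) ∧
      (∑ j, ε j / (c - s * a j) ^ 2) = 1 := by
    intro i
    have hsp := hsqpos i
    have hsl := hsqle i
    have hlh : s * a i + Real.sqrt (ε i) / 2 ≤ s * a i + 2 := by linarith
    have hcont : ContinuousOn (fun x => ∑ j, ε j / (x - s * a j) ^ 2)
        (Set.Icc (s * a i + Real.sqrt (ε i) / 2) (s * a i + 2)) := by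
      apply f_contOn
      intro x hx j
      rw [sub_ne_zero]
      refine ne_poles a δ hδa s hs0 hsδ i x ?_ ?_ j
      · rw [abs_le]; exact ⟨by linarith [hx.1], by linarith [hx.2]⟩
      · intro h; rw [h] at hx; linarith [hx.1]
    have hfhi : (∑ j, ε j / ((s * a i + 2) - s * a j) ^ 2) < 1 := by
      apply f_end a ε hε hsum δ hδ hδa s hs0 hsδ i
      rw [abs_of_nonneg (by linarith)]; ring
    have hflo : 1 < ∑ j, ε j / ((s * a i + Real.sqrt (ε i) / 2) - s * a j) ^ 2 := by
      apply one_lt_f a ε hε s i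
      · intro h; linarith [h]
      · rw [show s * a i + Real.sqrt (ε i) / 2 - s * a i = Real.sqrt (ε i) / 2 by ring,
          abs_of_nonneg (by linarith)]
        linarith
    have h1 : (1:ℝ) ∈ Set.Ioo (∑ j, ε j / ((s * a i + 2) - s * a j) ^ 2)
        (∑ j, ε j / ((s * a i + Real.sqrt (ε i) / 2) - s * a j) ^ 2) := ⟨hfhi, hflo⟩
    obtain ⟨c, hc, hfc⟩ := intermediate_value_Ioo' hlh hcont h1
    exact ⟨c, hc, hfc⟩
  choose cl hcl hfcl using hL
  choose cr hcr hfcr using hR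
  have hb1 : ∀ i : Fin k, s * a i - 2 < cl i ∧ cl i < s * a i := fun i =>
    ⟨(hcl i).1, by have := (hcl i).2; have := hsqpos i; linarith⟩
  have hb2 : ∀ i : Fin k, s * a i < cr i ∧ cr i < s * a i + 2 := fun i =>
    ⟨by have := (hcr i).1; have := hsqpos i; linarith, (hcr i).2⟩
  set z : Fin (2 * k) → ℝ := fun m =>
    if m.val % 2 = 0 then cl ⟨m.val / 2, by omega⟩ else cr ⟨m.val / 2, by omega⟩ with hzdef
  have hzeven : ∀ (m : Fin (2 * k)) (h : m.val % 2 = 0), z m = cl ⟨m.val / 2, by omega⟩ := by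
    intro m h
    simp only [hzdef, if_pos h]
  have hzodd : ∀ (m : Fin (2 * k)) (h : m.val % 2 ≠ 0), z m = cr ⟨m.val / 2, by omega⟩ := by
    intro m h
    simp only [hzdef, if_neg h]
  have hmemL : ∀ i : Fin k, ∀ m : Fin (2 * k), m.val = 2 * i.val →
      z m ∈ Set.Ioo (s * a i - 2) (s * a i - Real.sqrt (ε i) / 2) := by
    intro i m hm
    have h2 : m.val % 2 = 0 := by omega
    rw [hzeven m h2, show (⟨m.val / 2, by omega⟩ : Fin k) = i from Fin.ext (by simp; omega)]
    exact hcl i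
  have hmemR : ∀ i : Fin k, ∀ m : Fin (2 * k), m.val = 2 * i.val + 1 →
      z m ∈ Set.Ioo (s * a i + Real.sqrt (ε i) / 2) (s * a i + 2) := by
    intro i m hm
    have h2 : m.val % 2 ≠ 0 := by omega
    rw [hzodd m h2, show (⟨m.val / 2, by omega⟩ : Fin k) = i from Fin.ext (by simp; omega)]
    exact hcr i
  have hmono : StrictMono z := by
    intro m n hmn
    have hmn' : m.val < n.val := hmn
    by_cases hm2 : m.val % 2 = 0 <;> by_cases hn2 : n.val % 2 = 0
    · rw [hzeven m hm2, hzeven n hn2]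
      have hij : (⟨m.val / 2, by omega⟩ : Fin k) < ⟨n.val / 2, by omega⟩ := by
        rw [Fin.mk_lt_mk]; omega
      have := hgap _ _ hij
      linarith [(hb1 (⟨m.val / 2, by omega⟩ : Fin k)).2, (hb1 (⟨n.val / 2, by omega⟩ : Fin k)).1]
    · rw [hzeven m hm2, hzodd n hn2]
      rcases Nat.lt_or_ge (m.val / 2) (n.val / 2) with h | h
      · have hij : (⟨m.val / 2, by omega⟩ : Fin k) < ⟨n.val / 2, by omega⟩ := by
          rw [Fin.mk_lt_mk]; omega
        have := hgap _ _ hij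
        linarith [(hb1 (⟨m.val / 2, by omega⟩ : Fin k)).2, (hb2 (⟨n.val / 2, by omega⟩ : Fin k)).1]
      · have heq : (⟨m.val / 2, by omega⟩ : Fin k) = ⟨n.val / 2, by omega⟩ := Fin.ext (by simp; omega)
        rw [heq]
        linarith [(hb1 (⟨n.val / 2, by omega⟩ : Fin k)).2, (hb2 (⟨n.val / 2, by omega⟩ : Fin k)).1]
    · rw [hzodd m hm2, hzeven n hn2]
      have hij : (⟨m.val / 2, by omega⟩ : Fin k) < ⟨n.val / 2, by omega⟩ := by
        rw [Fin.mk_lt_mk]; omega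
      have := hgap _ _ hij
      linarith [(hb2 (⟨m.val / 2, by omega⟩ : Fin k)).2, (hb1 (⟨n.val / 2, by omega⟩ : Fin k)).1]
    · rw [hzodd m hm2, hzodd n hn2]
      have hij : (⟨m.val / 2, by omega⟩ : Fin k) < ⟨n.val / 2, by omega⟩ := by
        rw [Fin.mk_lt_mk]; omega
      have := hgap _ _ hij
      linarith [(hb2 (⟨m.val / 2, by omega⟩ : Fin k)).2, (hb2 (⟨n.val / 2, by omega⟩ : Fin k)).1]
  have hf1 : ∀ m : Fin (2 * k), (∑ j, ε j / (z m - s * a j) ^ 2) = 1 := by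
    intro m
    by_cases hm2 : m.val % 2 = 0
    · rw [hzeven m hm2]; exact hfcl _
    · rw [hzodd m hm2]; exact hfcr _
  have hne : ∀ m : Fin (2 * k), ∀ j, z m ≠ s * a j := by
    intro m
    by_cases hm2 : m.val % 2 = 0
    · rw [hzeven m hm2]
      set i : Fin k := ⟨m.val / 2, by omega⟩
      refine ne_poles a δ hδa s hs0 hsδ i (cl i) ?_ ?_
      · rw [abs_le]; exact ⟨by linarith [(hb1 i).1], by linarith [(hb1 i).2]⟩
      · exact ne_of_lt (hb1 i).2
    · rw [hzodd m hm2]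
      set i : Fin k := ⟨m.val / 2, by omega⟩
      refine ne_poles a δ hδa s hs0 hsδ i (cr i) ?_ ?_
      · rw [abs_le]; exact ⟨by linarith [(hb2 i).1], by linarith [(hb2 i).2]⟩
      · exact ne_of_gt (hb2 i).1
  have hcne : ∀ m : Fin (2 * k), ∀ j, ((z m : ℝ) : ℂ) ≠ (s : ℂ) * (a j : ℂ) := by
    intro m j h
    apply hne m j
    have : ((s * a j : ℝ) : ℂ) = (s : ℂ) * (a j : ℂ) := by push_cast; ring
    rw [← this] at h
    exact_mod_cast h
  have hcsum : ∀ m : Fin (2 * k),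
      ∑ j, (ε j : ℂ) / (((z m : ℝ) : ℂ) - (s : ℂ) * (a j : ℂ)) ^ 2 = 1 := by
    intro m
    rw [cast_sum a ε s (z m), hf1 m]
    norm_num
  have hset : {w : ℂ | (∀ j, w ≠ (s : ℂ) * (a j : ℂ)) ∧
      ∑ j, (ε j : ℂ) / (w - (s : ℂ) * (a j : ℂ)) ^ 2 = 1}
      = Set.range fun m : Fin (2 * k) => ((z m : ℝ) : ℂ) := by
    obtain ⟨P, hPm, hPd, hPiff⟩ := poly_aux hk (fun j => (s : ℂ) * (a j : ℂ)) (fun j => (ε j : ℂ))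
    have hg : Function.Injective (fun m : Fin (2 * k) => ((z m : ℝ) : ℂ)) := by
      intro m n h
      simp only at h
      exact hmono.injective (by exact_mod_cast h)
    have hroots : ∀ m : Fin (2 * k), P.eval ((z m : ℝ) : ℂ) = 0 :=
      fun m => (hPiff _ (hcne m)).2 (hcsum m)
    ext w
    simp only [Set.mem_setOf_eq, Set.mem_range]
    constructor
    · rintro ⟨hw1, hw2⟩
      obtain ⟨m, hm⟩ := roots_aux P hPm hPd _ hg hroots w ((hPiff w hw1).2 hw2)
      exact ⟨m, hm.symm⟩
    · rintro ⟨m, rfl⟩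
      exact ⟨hcne m, hcsum m⟩
  exact ⟨z, hmemL, hmemR, hmono, hset⟩
end

/-- large-time configuration. For `s` large, the branch-point equation
`∑_j ε_j/(z - s·a_j)² = 1` has exactly `2k` solutions, all real and distinct,
interlacing the scaled eigenvalues `s·a_i`, and `z_{2i∓1}(s) - s·a_i → ∓√ε_i` as `s → ∞`. -/
theorem stmt_7 (k : ℕ) (hk : 1 ≤ k) (a ε : Fin k → ℝ)
    (ha : StrictMono a) (hε : ∀ i, 0 < ε i) (hsum : ∑ i, ε i = 1) :
    ∃ s₀ > (0 : ℝ), ∃ z : ℝ → Fin (2 * k) → ℝ,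
      (∀ s : ℝ, s₀ < s →
        StrictMono (z s) ∧
        ({w : ℂ | (∀ j, w ≠ (s : ℂ) * (a j : ℂ)) ∧
            ∑ j, (ε j : ℂ) / (w - (s : ℂ) * (a j : ℂ)) ^ 2 = 1}
          = Set.range fun m : Fin (2 * k) => ((z s m : ℝ) : ℂ)) ∧
        (∀ i : Fin k,
          z s ⟨2 * i.val, by have := i.isLt; omega⟩ < s * a i ∧
          s * a i < z s ⟨2 * i.val + 1, by have := i.isLt; omega⟩)) ∧
      (∀ i : Fin k,
        Tendsto (fun s : ℝ => z s ⟨2 * i.val, by have := i.isLt; omega⟩ - s * a i)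
          atTop (nhds (-Real.sqrt (ε i))) ∧
        Tendsto (fun s : ℝ => z s ⟨2 * i.val + 1, by have := i.isLt; omega⟩ - s * a i)
          atTop (nhds (Real.sqrt (ε i)))) := by
  have hk0 : 0 < k := hk
  obtain ⟨δ, hδ, hδa⟩ := exists_delta a ha
  have hs₀pos : (0:ℝ) < max 1 (10 / δ) := lt_of_lt_of_le one_pos (le_max_left _ _)
  have hfacts : ∀ s : ℝ, max 1 (10 / δ) < s → 0 < s ∧ 10 < s * δ := by
    intro s hs
    have h1 : (1:ℝ) < s := lt_of_le_of_lt (le_max_left _ _) hs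
    have h2 : 10 / δ < s := lt_of_le_of_lt (le_max_right _ _) hs
    rw [div_lt_iff₀ hδ] at h2
    exact ⟨by linarith, by linarith⟩
  have hmain : ∀ s : ℝ, max 1 (10 / δ) < s → ∃ z : Fin (2 * k) → ℝ,
      (∀ i : Fin k, ∀ m : Fin (2 * k), m.val = 2 * i.val →
        z m ∈ Set.Ioo (s * a i - 2) (s * a i - Real.sqrt (ε i) / 2)) ∧
      (∀ i : Fin k, ∀ m : Fin (2 * k), m.val = 2 * i.val + 1 →
        z m ∈ Set.Ioo (s * a i + Real.sqrt (ε i) / 2) (s * a i + 2)) ∧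
      StrictMono z ∧
      ({w : ℂ | (∀ j, w ≠ (s : ℂ) * (a j : ℂ)) ∧
          ∑ j, (ε j : ℂ) / (w - (s : ℂ) * (a j : ℂ)) ^ 2 = 1}
        = Set.range fun m : Fin (2 * k) => ((z m : ℝ) : ℂ)) :=
    fun s hs => main_lemma hk0 a ε ha hε hsum δ hδ hδa s (hfacts s hs).1 (hfacts s hs).2
  choose! Z hmemL hmemR hmono hset using hmain
  have hsl : ∀ i : Fin k, Real.sqrt (ε i) ≤ 1 := fun i => by
    rw [show (1:ℝ) = Real.sqrt 1 by simp]
    exact Real.sqrt_le_sqrt (eps_le_one ε hε hsum i)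
  refine ⟨max 1 (10 / δ), hs₀pos, Z, ?_, ?_⟩
  · intro s hs
    refine ⟨hmono s hs, hset s hs, ?_⟩
    intro i
    have hsp := Real.sqrt_pos.2 (hε i)
    constructor
    · have h1 := hmemL s hs i ⟨2 * i.val, by have := i.isLt; omega⟩ rfl
      linarith [h1.2]
    · have h1 := hmemR s hs i ⟨2 * i.val + 1, by have := i.isLt; omega⟩ rfl
      linarith [h1.1]
  · intro i
    have hsp := Real.sqrt_pos.2 (hε i)
    have hsl' := hsl i
    have htend : Tendsto (fun s : ℝ => 1 / (s * δ - 2) ^ 2) atTop (nhds 0) := by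
      have h1 : Tendsto (fun s : ℝ => s * δ - 2) atTop atTop := by
        simpa [sub_eq_add_neg] using
          tendsto_atTop_add_const_right atTop (-2:ℝ) (tendsto_id.atTop_mul_const hδ)
      have h2 : Tendsto (fun s : ℝ => (s * δ - 2) ^ 2) atTop atTop :=
        (tendsto_pow_atTop two_ne_zero).comp h1
      simpa [one_div, Function.comp_def] using tendsto_inv_atTop_zero.comp h2
    constructor
    · -- left root
      rw [Metric.tendsto_nhds]
      intro r hr
      have hη0 : 0 < min (r/2) (Real.sqrt (ε i)/2) := lt_min (by linarith) (by linarith)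
      set η := min (r/2) (Real.sqrt (ε i)/2) with hηdef
      have hη1 : η ≤ r/2 := min_le_left _ _
      have hη2 : η ≤ Real.sqrt (ε i)/2 := min_le_right _ _
      have hpos : ε i < (Real.sqrt (ε i) + η) ^ 2 := by
        nlinarith [Real.sq_sqrt (hε i).le]
      have hpos2 : 0 < 1 - ε i / (Real.sqrt (ε i) + η) ^ 2 := by
        have h2 : 0 < (Real.sqrt (ε i) + η) ^ 2 := by positivity
        have := (div_lt_one h2).2 hpos
        linarith
      have hev2 : ∀ᶠ s in atTop, 1 / (s * δ - 2) ^ 2 < 1 - ε i / (Real.sqrt (ε i) + η) ^ 2 :=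
        htend.eventually_lt_const hpos2
      filter_upwards [eventually_gt_atTop (max 1 (10 / δ)), hev2] with s hs hs2
      obtain ⟨hs0, hsδ⟩ := hfacts s hs
      have hlh : s * a i - Real.sqrt (ε i) - η ≤ s * a i - Real.sqrt (ε i) + η := by linarith
      have hcont : ContinuousOn (fun x => ∑ j, ε j / (x - s * a j) ^ 2)
          (Set.Icc (s * a i - Real.sqrt (ε i) - η) (s * a i - Real.sqrt (ε i) + η)) := by
        apply f_contOn
        intro x hx j
        rw [sub_ne_zero]
        refine ne_poles a δ hδa s hs0 hsδ i x ?_ ?_ j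
        · rw [abs_le]; exact ⟨by linarith [hx.1], by linarith [hx.2]⟩
        · intro h; rw [h] at hx; linarith [hx.2]
      have hflo : (∑ j, ε j / ((s * a i - Real.sqrt (ε i) - η) - s * a j) ^ 2) < 1 := by
        rw [← Finset.add_sum_erase _ _ (Finset.mem_univ i)]
        have h1 : ((s * a i - Real.sqrt (ε i) - η) - s * a i) ^ 2 = (Real.sqrt (ε i) + η) ^ 2 := by
          ring
        rw [h1]
        have hoff := off_bound a ε hε hsum δ hδ hδa s hs0 hsδ i
          (s * a i - Real.sqrt (ε i) - η) (by rw [abs_le]; exact ⟨by linarith, by linarith⟩)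
        linarith
      have hfhi : 1 < ∑ j, ε j / ((s * a i - Real.sqrt (ε i) + η) - s * a j) ^ 2 := by
        apply one_lt_f a ε hε s i
        · intro h; linarith [h]
        · rw [show s * a i - Real.sqrt (ε i) + η - s * a i = -(Real.sqrt (ε i) - η) by ring,
            abs_neg, abs_of_nonneg (by linarith)]
          linarith
      obtain ⟨c, hc, hfc⟩ := intermediate_value_Ioo hlh hcont ⟨hflo, hfhi⟩
      obtain ⟨m, hmz, hml, -⟩ := unique_root a ε ha hε hsum δ hδ hδa s hs0 hsδ (Z s)
        (hmemL s hs) (hmemR s hs) (hset s hs) i c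
        (by rw [abs_lt]; exact ⟨by linarith [hc.1], by linarith [hc.2]⟩)
        (by intro h; linarith [hc.2]) hfc
      have hm2i : m.val = 2 * i.val := hml (by linarith [hc.2])
      have key : ∀ (pf : 2 * i.val < 2 * k), Z s ⟨2 * i.val, pf⟩ = c := by
        intro pf
        have h3 : (⟨2 * i.val, pf⟩ : Fin (2 * k)) = m := Fin.ext (by simp [hm2i])
        rw [h3, hmz]
      rw [Real.dist_eq, key _, abs_lt]
      exact ⟨by linarith [hc.1], by linarith [hc.2]⟩
    · -- right root
      rw [Metric.tendsto_nhds]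
      intro r hr
      have hη0 : 0 < min (r/2) (Real.sqrt (ε i)/2) := lt_min (by linarith) (by linarith)
      set η := min (r/2) (Real.sqrt (ε i)/2) with hηdef
      have hη1 : η ≤ r/2 := min_le_left _ _
      have hη2 : η ≤ Real.sqrt (ε i)/2 := min_le_right _ _
      have hpos : ε i < (Real.sqrt (ε i) + η) ^ 2 := by
        nlinarith [Real.sq_sqrt (hε i).le]
      have hpos2 : 0 < 1 - ε i / (Real.sqrt (ε i) + η) ^ 2 := by
        have h2 : 0 < (Real.sqrt (ε i) + η) ^ 2 := by positivity
        have := (div_lt_one h2).2 hpos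
        linarith
      have hev2 : ∀ᶠ s in atTop, 1 / (s * δ - 2) ^ 2 < 1 - ε i / (Real.sqrt (ε i) + η) ^ 2 :=
        htend.eventually_lt_const hpos2
      filter_upwards [eventually_gt_atTop (max 1 (10 / δ)), hev2] with s hs hs2
      obtain ⟨hs0, hsδ⟩ := hfacts s hs
      have hlh : s * a i + Real.sqrt (ε i) - η ≤ s * a i + Real.sqrt (ε i) + η := by linarith
      have hcont : ContinuousOn (fun x => ∑ j, ε j / (x - s * a j) ^ 2)
          (Set.Icc (s * a i + Real.sqrt (ε i) - η) (s * a i + Real.sqrt (ε i) + η)) := by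
        apply f_contOn
        intro x hx j
        rw [sub_ne_zero]
        refine ne_poles a δ hδa s hs0 hsδ i x ?_ ?_ j
        · rw [abs_le]; exact ⟨by linarith [hx.1], by linarith [hx.2]⟩
        · intro h; rw [h] at hx; linarith [hx.1]
      have hfhi : (∑ j, ε j / ((s * a i + Real.sqrt (ε i) + η) - s * a j) ^ 2) < 1 := by
        rw [← Finset.add_sum_erase _ _ (Finset.mem_univ i)]
        have h1 : ((s * a i + Real.sqrt (ε i) + η) - s * a i) ^ 2 = (Real.sqrt (ε i) + η) ^ 2 := by
          ring
        rw [h1]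
        have hoff := off_bound a ε hε hsum δ hδ hδa s hs0 hsδ i
          (s * a i + Real.sqrt (ε i) + η) (by rw [abs_le]; exact ⟨by linarith, by linarith⟩)
        linarith
      have hflo : 1 < ∑ j, ε j / ((s * a i + Real.sqrt (ε i) - η) - s * a j) ^ 2 := by
        apply one_lt_f a ε hε s i
        · intro h; linarith [h]
        · rw [show s * a i + Real.sqrt (ε i) - η - s * a i = Real.sqrt (ε i) - η by ring,
            abs_of_nonneg (by linarith)]
          linarith
      obtain ⟨c, hc, hfc⟩ := intermediate_value_Ioo' hlh hcont ⟨hfhi, hflo⟩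
      obtain ⟨m, hmz, -, hmr⟩ := unique_root a ε ha hε hsum δ hδ hδa s hs0 hsδ (Z s)
        (hmemL s hs) (hmemR s hs) (hset s hs) i c
        (by rw [abs_lt]; exact ⟨by linarith [hc.1], by linarith [hc.2]⟩)
        (by intro h; linarith [hc.1]) hfc
      have hm2i : m.val = 2 * i.val + 1 := hmr (by linarith [hc.1])
      have key : ∀ (pf : 2 * i.val + 1 < 2 * k), Z s ⟨2 * i.val + 1, pf⟩ = c := by
        intro pf
        have h3 : (⟨2 * i.val + 1, pf⟩ : Fin (2 * k)) = m := Fin.ext (by simp [hm2i])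
        rw [h3, hmz]
      rw [Real.dist_eq, key _, abs_lt]
      exact ⟨by linarith [hc.1], by linarith [hc.2]⟩
end

section
/- Let k ≥ 1 be an integer, a_1 < … < a_k distinct real numbers, and ε_1, …, ε_k positive reals with ε_1 + … + ε_k = 1. For s > 0 consider the branch-point equation ∑_{j=1}^k ε_j/(z − s·a_j)² = 1, whose solutions are the 2k roots (with multiplicity) of the monic polynomial Q_s(ξ) := ∏_{i=1}^k (ξ − s·a_i)² − ∑_{i=1}^k ε_i ∏_{j≠i} (ξ − s·a_j)². Then there exists s_1 > 0 such that for every s with 0 < s < s_1 the equation has exactly two real solutions; as s → 0⁺ these two real solutions converge to −1 and +1 respectively, while the remaining 2k − 2 roots of Q_s are nonreal (forming complex-conjugate pairs) and converge to 0. -/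
open Filter Polynomial


lemma term_est (c u v : ℂ) (hc : c = 1 ∨ c = -1) (hu : ‖u‖ ≤ 1/50) (hv : ‖v‖ ≤ 1/50) :
    ((c+u)*(c+v))^2 ≠ 0 ∧ ‖(u + v + 2*c)/(((c+u)*(c+v))^2) - 2*c‖ ≤ 1 := by
  have hc2 : c^2 = 1 := by rcases hc with h | h <;> simp [h]
  set q : ℂ := c*(u+v) + u*v with hq
  have hcn : ‖c‖ = 1 := by rcases hc with h | h <;> simp [h]
  have hqn : ‖q‖ ≤ 1/20 := by
    calc ‖q‖ ≤ ‖c*(u+v)‖ + ‖u*v‖ := norm_add_le _ _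
    _ = ‖c‖*‖u+v‖ + ‖u‖*‖v‖ := by rw [norm_mul, norm_mul]
    _ ≤ 1*(‖u‖+‖v‖) + ‖u‖*‖v‖ := by
        have h1 := norm_add_le u v
        have h2 := hcn
        nlinarith [norm_nonneg u, norm_nonneg v, norm_nonneg (u+v)]
    _ ≤ 1/20 := by nlinarith [norm_nonneg u, norm_nonneg v]
  have h1 : (c+u)*(c+v) = 1 + q := by rw [hq]; linear_combination hc2
  have hdn : ‖(1+q : ℂ)‖ ≥ 19/20 := by
    have h1' := norm_add_le (1+q : ℂ) (-q)
    simp only [add_neg_cancel_right, norm_one, norm_neg] at h1'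
    linarith
  have hne : ((c+u)*(c+v))^2 ≠ 0 := by
    rw [h1]
    apply pow_ne_zero
    intro h0
    rw [h0] at hdn; simp at hdn; linarith
  refine ⟨hne, ?_⟩
  have hnum : (u + v + 2*c) - 2*c*((c+u)*(c+v))^2 = (u+v) - 4*c*q - 2*c*q^2 := by
    rw [h1]; ring
  have hnumn : ‖(u + v + 2*c) - 2*c*((c+u)*(c+v))^2‖ ≤ 1/4 := by
    rw [hnum]
    calc ‖(u+v) - 4*c*q - 2*c*q^2‖ ≤ ‖(u+v) - 4*c*q‖ + ‖2*c*q^2‖ := norm_sub_le _ _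
    _ ≤ ‖u+v‖ + ‖4*c*q‖ + ‖2*c*q^2‖ := by
        have := norm_sub_le (u+v) (4*c*q); linarith
    _ ≤ (‖u‖+‖v‖) + 4*‖q‖ + 2*‖q‖^2 := by
        have h4 : ‖(4:ℂ)*c*q‖ = 4*‖q‖ := by
          rw [norm_mul, norm_mul, hcn]; simp
        have h2 : ‖(2:ℂ)*c*q^2‖ = 2*‖q‖^2 := by
          rw [norm_mul, norm_mul, hcn, norm_pow]; simp
        rw [h4, h2]
        have := norm_add_le u v
        linarith
    _ ≤ 1/4 := by nlinarith [norm_nonneg q]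
  have key : ‖(u + v + 2*c)/(((c+u)*(c+v))^2) - 2*c‖
      = ‖(u + v + 2*c) - 2*c*((c+u)*(c+v))^2‖ / ‖((c+u)*(c+v))^2‖ := by
    rw [← norm_div]
    congr 1
    rw [sub_div, mul_div_cancel_right₀ _ hne]
  rw [key]
  have hd2 : ‖((c+u)*(c+v))^2‖ ≥ 1/2 := by
    rw [h1, norm_pow]; nlinarith
  rw [div_le_one (by linarith)] at *
  calc ‖(u + v + 2*c) - 2*c*((c+u)*(c+v))^2‖ ≤ 1/4 := hnumn
  _ ≤ ‖((c+u)*(c+v))^2‖ := by linarith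
open Polynomial

lemma evalQ {k : ℕ} (a ε : Fin k → ℝ) (Qs : ℝ → Polynomial ℂ)
    (hQs : ∀ s : ℝ, Qs s = ∏ i, (X - C ((s : ℂ) * (a i : ℂ))) ^ 2
        - ∑ i, C ((ε i : ℂ)) *
            ∏ j ∈ Finset.univ.erase i, (X - C ((s : ℂ) * (a j : ℂ))) ^ 2)
    (s : ℝ) (w : ℂ) :
    (Qs s).eval w = ∏ i, (w - (s : ℂ) * a i)^2
      - ∑ i, (ε i : ℂ) * ∏ j ∈ Finset.univ.erase i, (w - (s : ℂ) * a j)^2 := by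
  rw [hQs]
  simp [eval_prod, eval_finset_sum]

lemma evalQ_factor {k : ℕ} (a ε : Fin k → ℝ) (Qs : ℝ → Polynomial ℂ)
    (hQs : ∀ s : ℝ, Qs s = ∏ i, (X - C ((s : ℂ) * (a i : ℂ))) ^ 2
        - ∑ i, C ((ε i : ℂ)) *
            ∏ j ∈ Finset.univ.erase i, (X - C ((s : ℂ) * (a j : ℂ))) ^ 2)
    (s : ℝ) (w : ℂ) (hw : ∀ j, w ≠ (s : ℂ) * a j) :
    (Qs s).eval w = (∏ i, (w - (s : ℂ) * a i)^2)
      * (1 - ∑ i, (ε i : ℂ) / (w - (s : ℂ) * a i)^2) := by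
  rw [evalQ a ε Qs hQs s w]
  have hne : ∀ i : Fin k, (w - (s : ℂ) * a i)^2 ≠ 0 := fun i =>
    pow_ne_zero _ (sub_ne_zero.mpr (hw i))
  have hterm : ∀ i : Fin k,
      (ε i : ℂ) * ∏ j ∈ Finset.univ.erase i, (w - (s : ℂ) * a j)^2
      = ((ε i : ℂ) / (w - (s : ℂ) * a i)^2) * ∏ j, (w - (s : ℂ) * a j)^2 := by
    intro i
    rw [← Finset.mul_prod_erase Finset.univ _ (Finset.mem_univ i),
      div_mul_eq_mul_div, mul_left_comm, mul_div_cancel_left₀ _ (hne i)]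
  rw [Finset.sum_congr rfl (fun i _ => hterm i), ← Finset.sum_mul]
  ring

lemma evalQ_pole_ne {k : ℕ} (a ε : Fin k → ℝ) (Qs : ℝ → Polynomial ℂ)
    (hQs : ∀ s : ℝ, Qs s = ∏ i, (X - C ((s : ℂ) * (a i : ℂ))) ^ 2
        - ∑ i, C ((ε i : ℂ)) *
            ∏ j ∈ Finset.univ.erase i, (X - C ((s : ℂ) * (a j : ℂ))) ^ 2)
    (hainj : Function.Injective a) (hε : ∀ i, 0 < ε i)
    (s : ℝ) (hs : s ≠ 0) (j : Fin k) :
    (Qs s).eval ((s : ℂ) * a j) ≠ 0 := by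
  rw [evalQ a ε Qs hQs s ((s : ℂ) * a j)]
  set w : ℂ := (s : ℂ) * a j with hw
  have hzero : ∏ i, (w - (s : ℂ) * a i)^2 = 0 :=
    Finset.prod_eq_zero (Finset.mem_univ j) (by simp [hw])
  have hsum : ∑ i, (ε i : ℂ) * ∏ l ∈ Finset.univ.erase i, (w - (s : ℂ) * a l)^2
      = (ε j : ℂ) * ∏ l ∈ Finset.univ.erase j, (w - (s : ℂ) * a l)^2 := by
    apply Finset.sum_eq_single
    · intro i _ hij
      have : ∏ l ∈ Finset.univ.erase i, (w - (s : ℂ) * a l)^2 = 0 :=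
        Finset.prod_eq_zero (Finset.mem_erase.mpr ⟨(Ne.symm hij), Finset.mem_univ j⟩)
          (by simp [hw])
      rw [this, mul_zero]
    · intro h; exact absurd (Finset.mem_univ j) h
  rw [hzero, hsum]
  simp only [zero_sub, neg_ne_zero]
  apply mul_ne_zero
  · exact_mod_cast (hε j).ne'
  · apply Finset.prod_ne_zero_iff.mpr
    intro l hl
    apply pow_ne_zero
    rw [sub_ne_zero, hw]
    intro hcontra
    have hsc : (s : ℂ) ≠ 0 := by exact_mod_cast hs
    have : (a j : ℂ) = (a l : ℂ) := mul_left_cancel₀ hsc hcontra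
    have : a j = a l := by exact_mod_cast this
    exact (Finset.mem_erase.mp hl).1 (hainj this.symm)
set_option maxHeartbeats 1000000 in

lemma realside (k : ℕ) (hk : 1 ≤ k) (a ε : Fin k → ℝ)
    (ha : StrictMono a) (hε : ∀ i, 0 < ε i) (hsum : ∑ i, ε i = 1) :
    ∃ s₁ > (0:ℝ), ∃ M : ℝ, 1 ≤ M ∧ (∀ i, |a i| ≤ M) ∧
      ∀ s : ℝ, 0 < s → s < s₁ → ∃ x y : ℝ,
        x < y ∧ |x + 1| ≤ s*M ∧ |y - 1| ≤ s*M ∧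
        {z : ℝ | (∀ j, z ≠ s * a j) ∧ ∑ j, ε j / (z - s * a j) ^ 2 = 1} = {x, y} := by
  classical
  set i0 : Fin k := ⟨0, hk⟩ with hi0
  set ik : Fin k := ⟨k-1, by omega⟩ with hik
  obtain ⟨M, hM1, habsM⟩ : ∃ M : ℝ, 1 ≤ M ∧ ∀ i, |a i| ≤ M := by
    refine ⟨1 + ∑ i, |a i|, ?_, ?_⟩
    · have : (0:ℝ) ≤ ∑ i, |a i| := Finset.sum_nonneg fun i _ => abs_nonneg _
      linarith
    · intro i
      have := Finset.single_le_sum (f := fun i => |a i|) (fun i _ => abs_nonneg _)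
        (Finset.mem_univ i)
      linarith
  obtain ⟨εm, hεmpos, hεm1, hεmi0, hεmik⟩ :
      ∃ εm : ℝ, 0 < εm ∧ εm ≤ 1 ∧ εm ≤ ε i0 ∧ εm ≤ ε ik := by
    refine ⟨min (ε i0) (ε ik), lt_min (hε i0) (hε ik), ?_, min_le_left _ _, min_le_right _ _⟩
    have := Finset.single_le_sum (f := ε) (fun i _ => (hε i).le) (Finset.mem_univ i0)
    rw [hsum] at this
    exact le_trans (min_le_left _ _) this
  have haik : ∀ j, a j ≤ a ik := by
    intro j
    apply ha.monotone
    rw [Fin.le_def]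
    simp [hik]
    omega
  have hai0 : ∀ j, a i0 ≤ a j := by
    intro j
    apply ha.monotone
    rw [Fin.le_def]
    simp [hi0]
  refine ⟨εm/(2*M), by positivity, M, hM1, habsM, ?_⟩
  intro s hs hss
  obtain ⟨B, hB, hBpos, hB2⟩ : ∃ B : ℝ, B = s * M ∧ 0 < B ∧ 2 * B < εm := by
    refine ⟨s * M, rfl, by positivity, ?_⟩
    have h : s * M < (εm/(2*M)) * M := mul_lt_mul_of_pos_right hss (by linarith)
    have h2 : (εm/(2*M)) * M = εm/2 := by field_simp
    nlinarith
  have hBhalf : B < 1/2 := by nlinarith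
  have hpole : ∀ j, |s * a j| ≤ B := by
    intro j
    rw [abs_mul, abs_of_pos hs, hB]
    exact mul_le_mul_of_nonneg_left (habsM j) hs.le
  -- notation for f
  set f : ℝ → ℝ := fun x => ∑ j, ε j / (x - s * a j) ^ 2 with hf
  have hterm_pos : ∀ x, (∀ j, x ≠ s * a j) → ∀ j, 0 < ε j / (x - s * a j)^2 := by
    intro x hx j
    apply div_pos (hε j)
    have : x - s * a j ≠ 0 := sub_ne_zero.mpr (hx j)
    positivity
  -- middle bound
  have middle : ∀ x, |x| ≤ B → (∀ j, x ≠ s * a j) → 1 < f x := by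
    intro x hxB hx
    have hd : x - s * a i0 ≠ 0 := sub_ne_zero.mpr (hx i0)
    have h1 : ε i0 / (x - s * a i0)^2 ≤ f x := by
      apply Finset.single_le_sum (f := fun j => ε j / (x - s * a j)^2)
        (fun j _ => (hterm_pos x hx j).le) (Finset.mem_univ i0)
    have h2 : |x - s * a i0| ≤ 2 * B := by
      have := hpole i0
      have := abs_sub_abs_le_abs_sub x (s * a i0)
      have h3 := abs_sub (x) (s * a i0)
      calc |x - s * a i0| ≤ |x| + |s * a i0| := abs_sub _ _
      _ ≤ 2 * B := by linarith [hpole i0]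
    have h4 : (x - s * a i0)^2 < ε i0 := by
      have h5 : (x - s*a i0)^2 ≤ (2*B)^2 := by
        rw [← sq_abs]
        apply pow_le_pow_left₀ (abs_nonneg _) h2
      have h6 : (2*B)^2 < εm^2 := by
        apply pow_lt_pow_left₀ hB2 (by linarith) (by norm_num)
      have h7 : εm^2 ≤ εm := by nlinarith
      have h8 : εm ≤ ε i0 := hεmi0
      linarith
    have h9 : 1 < ε i0 / (x - s * a i0)^2 := by
      rw [lt_div_iff₀ (by positivity)]
      linarith
    linarith
  -- monotonicity right
  have mono_right : ∀ x y, s * a ik < x → x < y → f y < f x := by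
    intro x y hx hxy
    apply Finset.sum_lt_sum_of_nonempty ⟨i0, Finset.mem_univ i0⟩
    intro j _
    have hj : s * a j ≤ s * a ik := mul_le_mul_of_nonneg_left (haik j) hs.le
    have h1 : 0 < x - s * a j := by linarith
    have h2 : x - s * a j < y - s * a j := by linarith
    apply div_lt_div_of_pos_left (hε j) (by positivity)
    nlinarith
  -- monotonicity left
  have mono_left : ∀ x y, x < y → y < s * a i0 → f x < f y := by
    intro x y hxy hy
    apply Finset.sum_lt_sum_of_nonempty ⟨i0, Finset.mem_univ i0⟩
    intro j _
    have hj : s * a i0 ≤ s * a j := mul_le_mul_of_nonneg_left (hai0 j) hs.le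
    have h1 : y - s * a j < 0 := by linarith
    have h2 : x - s * a j < y - s * a j := by linarith
    have h0 : 0 < (y - s * a j)^2 := by nlinarith
    apply div_lt_div_of_pos_left (hε j) h0
    nlinarith
  -- continuity off poles
  have cont : ∀ S : Set ℝ, (∀ x ∈ S, ∀ j, x ≠ s * a j) → ContinuousOn f S := by
    intro S hS
    apply continuousOn_finset_sum
    intro j _
    apply ContinuousOn.div continuousOn_const
    · exact ((continuous_id.sub continuous_const).pow 2).continuousOn
    · intro x hx
      have : x - s * a j ≠ 0 := sub_ne_zero.mpr (hS x hx j)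
      positivity
  -- f 2 < 1 and f (-2) < 1
  have far : ∀ x : ℝ, |x| = 2 → f x < 1 := by
    intro x hx
    rw [← hsum]
    apply Finset.sum_lt_sum_of_nonempty ⟨i0, Finset.mem_univ i0⟩
    intro j _
    have h1 : 1 < |x - s * a j| := by
      have := hpole j
      have := abs_sub_abs_le_abs_sub x (s * a j)
      linarith [hx ▸ this]
    have h2 : 1 < (x - s * a j)^2 := by
      rw [← sq_abs]; nlinarith
    exact div_lt_self (hε j) h2
  have hjik : ∀ j, s * a j ≤ s * a ik := fun j => mul_le_mul_of_nonneg_left (haik j) hs.le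
  have hji0 : ∀ j, s * a i0 ≤ s * a j := fun j => mul_le_mul_of_nonneg_left (hai0 j) hs.le
  have hikB : s * a ik ≤ B := le_trans (le_abs_self _) (hpole ik)
  have hi0B : -B ≤ s * a i0 := by linarith [(abs_le.mp (hpole i0)).1]
  -- right root via IVT
  set lo : ℝ := s * a ik + εm/2 with hlo
  have hlo2 : lo ≤ 2 := by rw [hlo]; linarith
  have hloj : ∀ j, s * a j < lo := fun j => lt_of_le_of_lt (hjik j) (by rw [hlo]; linarith)
  have hcontR : ContinuousOn f (Set.Icc lo 2) := by
    apply cont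
    intro x hx j
    have := hloj j
    have := hx.1
    intro hcon
    rw [hcon] at this
    linarith [hx.1, hloj j]
  have hfl : 1 < f lo := by
    have hne : ∀ j, lo ≠ s * a j := fun j => (hloj j).ne'
    have h1 : ε ik / (lo - s * a ik)^2 ≤ f lo :=
      Finset.single_le_sum (f := fun j => ε j / (lo - s * a j)^2)
        (fun j _ => (hterm_pos lo hne j).le) (Finset.mem_univ ik)
    have hdd : lo - s * a ik = εm/2 := by rw [hlo]; ring
    have h9 : 1 < ε ik / (lo - s * a ik)^2 := by
      rw [hdd, lt_div_iff₀ (by positivity)]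
      have h8 : εm ≤ ε ik := hεmik
      nlinarith [hεmpos, hεm1, h8]
    linarith
  have hf2 : f 2 < 1 := far 2 (by norm_num)
  obtain ⟨y, hyIcc, hfy⟩ := intermediate_value_Icc' hlo2 hcontR ⟨hf2.le, hfl.le⟩
  have hyne : ∀ j, y ≠ s * a j := fun j => (lt_of_lt_of_le (hloj j) hyIcc.1).ne'
  have hyB : B < y := by
    have h1 : ¬ (|y| ≤ B) := fun hcon => absurd hfy (by have := middle y hcon hyne; linarith)
    have h2 : -B < y := lt_of_le_of_lt hi0B (lt_of_le_of_lt (hji0 ik) (lt_of_lt_of_le (hloj ik) hyIcc.1))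
    rcases le_or_gt y B with h | h
    · exact absurd (abs_le.mpr ⟨h2.le, h⟩) h1
    · exact h
  -- left root via IVT
  set hi' : ℝ := s * a i0 - εm/2 with hhi
  have hlo2' : (-2:ℝ) ≤ hi' := by rw [hhi]; linarith
  have hhij : ∀ j, hi' < s * a j := fun j => lt_of_lt_of_le (by rw [hhi]; linarith) (hji0 j)
  have hcontL : ContinuousOn f (Set.Icc (-2) hi') := by
    apply cont
    intro x hx j
    intro hcon
    rw [hcon] at hx
    linarith [hx.2, hhij j]
  have hfl' : 1 < f hi' := by
    have hne : ∀ j, hi' ≠ s * a j := fun j => (hhij j).ne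
    have h1 : ε i0 / (hi' - s * a i0)^2 ≤ f hi' :=
      Finset.single_le_sum (f := fun j => ε j / (hi' - s * a j)^2)
        (fun j _ => (hterm_pos hi' hne j).le) (Finset.mem_univ i0)
    have hdd : hi' - s * a i0 = -(εm/2) := by rw [hhi]; ring
    have h9 : 1 < ε i0 / (hi' - s * a i0)^2 := by
      have hp : (0:ℝ) < (-(εm/2))^2 := by
        rw [show (-(εm/2))^2 = (εm/2)^2 by ring]; exact pow_pos (by linarith) 2
      rw [hdd, lt_div_iff₀ hp]
      have h8 : εm ≤ ε i0 := hεmi0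
      nlinarith [hεmpos, hεm1, h8]
    linarith
  have hf2' : f (-2) < 1 := far (-2) (by norm_num; )
  obtain ⟨x, hxIcc, hfx⟩ := intermediate_value_Icc hlo2' hcontL ⟨hf2'.le, hfl'.le⟩
  have hxne : ∀ j, x ≠ s * a j := fun j => (lt_of_le_of_lt hxIcc.2 (hhij j)).ne
  have hxB : x < -B := by
    have h1 : ¬ (|x| ≤ B) := fun hcon => absurd hfx (by have := middle x hcon hxne; linarith)
    have h2 : x < B := lt_of_le_of_lt hxIcc.2 (lt_of_lt_of_le (hhij i0) (le_trans (le_abs_self _) (hpole i0)))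
    rcases lt_or_ge x (-B) with h | h
    · exact h
    · exact absurd (abs_le.mpr ⟨h, h2.le⟩) h1
  -- location bounds
  have right_loc : ∀ z, B < z → f z = 1 → |z - 1| ≤ B := by
    intro z hzB hfz
    have hd1 : ∀ j, z - s * a j ≤ z + B := fun j => by linarith [(abs_le.mp (hpole j)).1]
    have hd2 : ∀ j, z - B ≤ z - s * a j := fun j => by linarith [(abs_le.mp (hpole j)).2]
    have hd3 : ∀ j, 0 < z - s * a j := fun j => lt_of_lt_of_le (by linarith) (hd2 j)
    have hp1 : 0 < (z + B)^2 := pow_pos (by linarith) 2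
    have hp2 : 0 < (z - B)^2 := pow_pos (by linarith) 2
    have hlow : 1 / (z + B)^2 ≤ f z := by
      rw [show (1:ℝ)/(z+B)^2 = ∑ j, ε j / (z+B)^2 by rw [← Finset.sum_div, hsum]]
      apply Finset.sum_le_sum
      intro j _
      have hq : 0 < (z - s * a j)^2 := pow_pos (hd3 j) 2
      apply div_le_div_of_nonneg_left (hε j).le hq
      nlinarith [hd1 j, hd3 j]
    have hupp : f z ≤ 1 / (z - B)^2 := by
      rw [show (1:ℝ)/(z-B)^2 = ∑ j, ε j / (z-B)^2 by rw [← Finset.sum_div, hsum]]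
      apply Finset.sum_le_sum
      intro j _
      apply div_le_div_of_nonneg_left (hε j).le hp2
      nlinarith [hd2 j, hd3 j]
    rw [hfz] at hlow hupp
    have hA : 1 ≤ (z + B)^2 := by
      rw [div_le_one hp1] at hlow
      exact hlow
    have hBb : (z - B)^2 ≤ 1 := by
      rw [le_div_iff₀ hp2] at hupp
      linarith
    rw [abs_le]
    constructor
    · nlinarith
    · nlinarith
  have left_loc : ∀ z, z < -B → f z = 1 → |z + 1| ≤ B := by
    intro z hzB hfz
    have hd1 : ∀ j, z - s * a j ≤ z + B := fun j => by linarith [(abs_le.mp (hpole j)).1]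
    have hd2 : ∀ j, z - B ≤ z - s * a j := fun j => by linarith [(abs_le.mp (hpole j)).2]
    have hd3 : ∀ j, z - s * a j < 0 := fun j => lt_of_le_of_lt (hd1 j) (by linarith)
    have hp1 : 0 < (z + B)^2 := by
      rw [show (z+B)^2 = (-(z+B))^2 by ring]; exact pow_pos (by linarith) 2
    have hp2 : 0 < (z - B)^2 := by
      rw [show (z-B)^2 = (-(z-B))^2 by ring]; exact pow_pos (by linarith) 2
    have hlow : 1 / (z - B)^2 ≤ f z := by
      rw [show (1:ℝ)/(z-B)^2 = ∑ j, ε j / (z-B)^2 by rw [← Finset.sum_div, hsum]]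
      apply Finset.sum_le_sum
      intro j _
      have hq : 0 < (z - s * a j)^2 := by
        rw [show (z - s*a j)^2 = (-(z - s*a j))^2 by ring]
        exact pow_pos (by linarith [hd3 j]) 2
      apply div_le_div_of_nonneg_left (hε j).le hq
      nlinarith [hd2 j, hd3 j]
    have hupp : f z ≤ 1 / (z + B)^2 := by
      rw [show (1:ℝ)/(z+B)^2 = ∑ j, ε j / (z+B)^2 by rw [← Finset.sum_div, hsum]]
      apply Finset.sum_le_sum
      intro j _
      apply div_le_div_of_nonneg_left (hε j).le hp1
      nlinarith [hd1 j, hd3 j]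
    rw [hfz] at hlow hupp
    have hA : 1 ≤ (z - B)^2 := by
      rw [div_le_one hp2] at hlow
      exact hlow
    have hBb : (z + B)^2 ≤ 1 := by
      rw [le_div_iff₀ hp1] at hupp
      linarith
    rw [abs_le]
    constructor
    · nlinarith
    · nlinarith
  refine ⟨x, y, by linarith, by rw [← hB]; exact left_loc x hxB hfx,
    by rw [← hB]; exact right_loc y hyB hfy, ?_⟩
  ext z
  simp only [Set.mem_setOf_eq, Set.mem_insert_iff, Set.mem_singleton_iff]
  constructor
  · rintro ⟨hzne, hfz⟩
    have h1 : ¬ (|z| ≤ B) := fun hcon => absurd hfz (by have := middle z hcon hzne; linarith)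
    rcases le_or_gt z B with h | h
    · -- z < -B, uniqueness vs x
      have hzB : z < -B := by
        rcases lt_or_ge z (-B) with h' | h'
        · exact h'
        · exact absurd (abs_le.mpr ⟨h', h⟩) h1
      left
      by_contra hne
      rcases lt_trichotomy z x with h' | h' | h'
      · have := mono_left z x h' (by linarith [hhij i0, hxIcc.2, hi0B]; )
        have hz' : f z = 1 := hfz
        rw [hz', hfx] at this; linarith
      · exact hne h'
      · have := mono_left x z h' (by linarith [hi0B])
        have hz' : f z = 1 := hfz
        rw [hz', hfx] at this; linarith
    · right
      by_contra hne
      rcases lt_trichotomy z y with h' | h' | h'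
      · have := mono_right z y (by linarith [hikB]) h'
        have hz' : f z = 1 := hfz
        rw [hz', hfy] at this; linarith
      · exact hne h'
      · have := mono_right y z (by linarith [hikB]) h'
        have hz' : f z = 1 := hfz
        rw [hz', hfy] at this; linarith
  · intro hz
    rcases hz with h | h
    · exact h ▸ ⟨hxne, hfx⟩
    · exact h ▸ ⟨hyne, hfy⟩

set_option maxHeartbeats 1000000 in
lemma complex_loc (k : ℕ) (a ε : Fin k → ℝ) (hε : ∀ i, 0 < ε i) (hsum : ∑ i, ε i = 1)
    (s : ℝ) (M : ℝ) (hM1 : 1 ≤ M) (habsM : ∀ i, |a i| ≤ M) (hs : 0 < s)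
    (δ' : ℝ) (hδ : 0 < δ') (hδ1 : δ' ≤ 1/100) (hsmall : s * M ≤ δ'^4/8000)
    (w : ℂ) (hw : w.im ≠ 0)
    (heq : ∑ j, (ε j : ℂ) / (w - (s:ℂ) * (a j : ℂ))^2 = 1) :
    ‖w‖ < δ' := by
  classical
  by_contra hcon
  push_neg at hcon
  -- make the pole locations opaque
  obtain ⟨b, hbnorm, hbconj, heq'⟩ :
      ∃ b : Fin k → ℂ, (∀ j, ‖b j‖ ≤ s * M) ∧ (∀ j, (starRingEnd ℂ) (b j) = b j) ∧
        ∑ j, (ε j : ℂ) / (w - b j)^2 = 1 := by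
    refine ⟨fun j => (s:ℂ) * (a j : ℂ), ?_, ?_, heq⟩
    · intro j
      show ‖(s:ℂ) * (a j : ℂ)‖ ≤ s * M
      have h1 : (s:ℂ) * (a j : ℂ) = ((s * a j : ℝ) : ℂ) := by push_cast; ring
      rw [h1, Complex.norm_real, Real.norm_eq_abs, abs_mul, abs_of_pos hs]
      exact mul_le_mul_of_nonneg_left (habsM j) hs.le
    · intro j
      simp [map_mul, Complex.conj_ofReal]
  clear heq
  have hsumC : ∑ j, (ε j : ℂ) = 1 := by exact_mod_cast congrArg (fun t : ℝ => (t:ℂ)) hsum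
  have hδle1 : δ' ≤ 1 := by linarith
  have hδ3 : δ'^3 ≤ 1 := pow_le_one₀ hδ.le hδle1
  have hδ4 : δ'^4/8000 ≤ δ'/8000 := by nlinarith
  have hsM0 : 0 < s * M := by positivity
  have hbsmall : ∀ j, ‖b j‖ ≤ δ'/2 := fun j => le_trans (hbnorm j) (by linarith)
  have hbim : ∀ j, (b j).im = 0 := by
    intro j
    have h := congrArg Complex.im (hbconj j)
    rw [Complex.conj_im] at h
    linarith
  have hwb : ∀ j, w - b j ≠ 0 := by
    intro j h0
    apply hw
    have h1 : w = b j := sub_eq_zero.mp h0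
    rw [h1]; exact hbim j
  -- step: |w| ≤ 2
  have hw2 : ‖w‖ ≤ 2 := by
    by_contra h2
    push_neg at h2
    have hterm : ∀ j : Fin k, ‖(ε j : ℂ) / (w - b j)^2‖ ≤ ε j * (4/9) := by
      intro j
      have h3 : (3:ℝ)/2 ≤ ‖w - b j‖ := by
        have := norm_sub_norm_le w (b j)
        have hbj := hbsmall j
        linarith
      rw [norm_div, norm_pow, Complex.norm_real, Real.norm_eq_abs, abs_of_pos (hε j)]
      rw [div_le_iff₀ (by positivity)]
      nlinarith [hε j, sq_nonneg (‖w - b j‖ - 3/2)]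
    have h4 : ‖∑ j, (ε j : ℂ) / (w - b j)^2‖ ≤ ∑ j, ε j * (4/9) :=
      le_trans (norm_sum_le _ _) (Finset.sum_le_sum fun j _ => hterm j)
    rw [heq'] at h4
    rw [← Finset.sum_mul, hsum] at h4
    norm_num at h4
  have hw0 : w ≠ 0 := fun h0 => hw (by rw [h0]; simp)
  have hwbδ : ∀ j, δ'/2 ≤ ‖w - b j‖ := by
    intro j
    have := norm_sub_norm_le w (b j)
    have hbj := hbsmall j
    linarith
  -- step: |w^2 - 1| ≤ ρ
  set ρ : ℝ := 80 * (s*M) / δ'^4 with hρdef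
  have hρpos : 0 < ρ := by positivity
  have hρ : ρ ≤ 1/100 := by
    rw [hρdef, div_le_iff₀ (by positivity)]
    nlinarith
  have hpt : ∀ j : Fin k, (ε j:ℂ)/(w - b j)^2 - (ε j:ℂ)/w^2
      = (ε j:ℂ) * (b j * (2*w - b j)/((w - b j)^2 * w^2)) := by
    intro j
    have h1 := hwb j
    field_simp
    ring
  have hkey : (1:ℂ) - 1/w^2 = ∑ j, (ε j : ℂ) * (b j * (2*w - b j)/((w - b j)^2 * w^2)) := by
    calc (1:ℂ) - 1/w^2 = ∑ j, ((ε j:ℂ)/(w - b j)^2 - (ε j:ℂ)/w^2) := by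
          rw [Finset.sum_sub_distrib, heq', ← Finset.sum_div, hsumC]
    _ = _ := Finset.sum_congr rfl fun j _ => hpt j
  have hw2' : ‖w‖^2 ≤ 4 := by
    nlinarith [norm_nonneg w]
  have hwδ2 : δ'^2 ≤ ‖w‖^2 := by
    apply pow_le_pow_left₀ hδ.le
    exact hcon
  have hterm2 : ∀ j : Fin k, ‖(ε j : ℂ) * (b j * (2*w - b j)/((w - b j)^2 * w^2))‖
      ≤ ε j * (20 * (s*M) / δ'^4) := by
    intro j
    rw [show (ε j:ℂ) * (b j * (2*w - b j)/((w - b j)^2 * w^2))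
        = ((ε j:ℂ) * (b j * (2*w - b j))) / ((w - b j)^2 * w^2) from by ring]
    rw [norm_div, norm_mul, norm_mul, norm_mul, norm_pow, norm_pow,
      Complex.norm_real, Real.norm_eq_abs, abs_of_pos (hε j)]
    rw [mul_div_assoc]
    apply mul_le_mul_of_nonneg_left _ (hε j).le
    have h2wb : ‖2*w - b j‖ ≤ 5 := by
      have h1 := norm_sub_le (2*w) (b j)
      have h2 : ‖(2:ℂ)*w‖ = 2 * ‖w‖ := by
        rw [norm_mul, Complex.norm_ofNat]
      have h3 := hbsmall j
      have h4 : ‖w‖ ≤ 2 := by exact hw2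
      rw [h2] at h1
      linarith
    have hd1 : (δ'/2)^2 ≤ ‖w - b j‖^2 := pow_le_pow_left₀ (by positivity) (hwbδ j) 2
    have hwbpos : 0 < ‖w - b j‖ := lt_of_lt_of_le (by positivity) (hwbδ j)
    have hwpos : 0 < ‖w‖ := by linarith
    have hpos2 : 0 < ‖w - b j‖^2 * ‖w‖^2 := mul_pos (pow_pos hwbpos 2) (pow_pos hwpos 2)
    rw [div_le_div_iff₀ hpos2 (by positivity)]
    have hb5 : ‖b j‖ * ‖2*w - b j‖ ≤ (s*M) * 5 :=
      mul_le_mul (hbnorm j) h2wb (norm_nonneg _) hsM0.le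
    calc ‖b j‖ * ‖2*w - b j‖ * δ'^4 ≤ (s*M) * 5 * δ'^4 :=
          mul_le_mul_of_nonneg_right hb5 (by positivity)
    _ = 20 * (s*M) * ((δ'/2)^2 * δ'^2) := by ring
    _ ≤ 20 * (s*M) * (‖w - b j‖^2 * ‖w‖^2) := by
          apply mul_le_mul_of_nonneg_left _ (by positivity)
          apply mul_le_mul hd1 hwδ2 (by positivity) (by positivity)
  have hsq : ‖(1:ℂ) - 1/w^2‖ ≤ 20 * (s*M) / δ'^4 := by
    rw [hkey]
    refine le_trans (norm_sum_le _ _) (le_trans (Finset.sum_le_sum fun j _ => hterm2 j) ?_)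
    rw [← Finset.sum_mul, hsum, one_mul]
  have hw21 : ‖w^2 - 1‖ ≤ ρ := by
    have h1 : w^2 - 1 = w^2 * (1 - 1/w^2) := by field_simp
    rw [h1, norm_mul, norm_pow, hρdef]
    calc ‖w‖^2 * ‖1 - 1/w^2‖ ≤ 4 * (20 * (s*M)/δ'^4) :=
          mul_le_mul hw2' hsq (norm_nonneg _) (by norm_num)
    _ = 80 * (s*M)/δ'^4 := by ring
  -- step: w is close to c = ±1
  obtain ⟨c, hc, hwc⟩ : ∃ c : ℂ, (c = 1 ∨ c = -1) ∧ ‖w - c‖ ≤ ρ := by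
    have hprod : ‖w - 1‖ * ‖w + 1‖ = ‖w^2 - 1‖ := by
      rw [← norm_mul]
      congr 1
      ring
    have htwo : (2:ℝ) ≤ ‖w - 1‖ + ‖w + 1‖ := by
      have h1 := norm_sub_le (w+1) (w-1)
      have h2 : (w+1) - (w-1) = 2 := by ring
      rw [h2] at h1
      have h3 : ‖(2:ℂ)‖ = 2 := by norm_num
      linarith [norm_sub_le (w+1) (w-1)]
    rcases le_total (‖w - 1‖) (‖w + 1‖) with h | h
    · refine ⟨1, Or.inl rfl, ?_⟩
      have h1 : (1:ℝ) ≤ ‖w + 1‖ := by linarith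
      nlinarith [norm_nonneg (w - 1), hw21]
    · refine ⟨-1, Or.inr rfl, ?_⟩
      have h1 : (1:ℝ) ≤ ‖w - 1‖ := by linarith
      have h2 : ‖w - -1‖ = ‖w + 1‖ := by rw [sub_neg_eq_add]
      rw [h2]
      nlinarith [norm_nonneg (w + 1), hw21]
  -- conjugate is also a solution
  set w' : ℂ := (starRingEnd ℂ) w with hw'
  have heqc : ∑ j, (ε j : ℂ) / (w' - b j)^2 = 1 := by
    have := congrArg (starRingEnd ℂ) heq'
    rw [map_sum, map_one] at this
    rw [← this]
    apply Finset.sum_congr rfl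
    intro j _
    rw [map_div₀, map_pow, map_sub, hbconj j, Complex.conj_ofReal]
  have hw'b : ∀ j, w' - b j ≠ 0 := by
    intro j h0
    apply hw
    have h1 : w' = b j := sub_eq_zero.mp h0
    have h2 : w'.im = -w.im := by rw [hw', Complex.conj_im]
    have h3 : w'.im = 0 := by rw [h1, hbim j]
    linarith
  have hww' : w' ≠ w := by
    intro h0
    apply hw
    have := congrArg Complex.im h0
    rw [hw', Complex.conj_im] at this
    linarith
  -- the difference identity
  have hdiff : (0:ℂ) = (w' - w) * ∑ j, (ε j : ℂ) *
      ((w + w' - 2 * b j)/((w - b j)^2 * (w' - b j)^2)) := by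
    have h0 : (0:ℂ) = ∑ j, ((ε j:ℂ)/(w - b j)^2 - (ε j:ℂ)/(w' - b j)^2) := by
      rw [Finset.sum_sub_distrib, heq', heqc, sub_self]
    rw [h0, Finset.mul_sum]
    apply Finset.sum_congr rfl
    intro j _
    have h1 := hwb j
    have h2 := hw'b j
    field_simp
    ring
  have hS : ∑ j, (ε j : ℂ) * ((w + w' - 2 * b j)/((w - b j)^2 * (w' - b j)^2)) = 0 := by
    rcases mul_eq_zero.mp hdiff.symm with h | h
    · exact absurd (sub_eq_zero.mp h) hww'
    · exact h
  -- estimate each term near 2c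
  have hcnorm : ‖c‖ = 1 := by rcases hc with h | h <;> simp [h]
  have hterm3 : ∀ j : Fin k,
      ‖(w + w' - 2 * b j)/((w - b j)^2 * (w' - b j)^2) - 2*c‖ ≤ 1 := by
    intro j
    have hu : ‖w - b j - c‖ ≤ 1/50 := by
      have h1 := norm_add_le (w - c) (-(b j))
      rw [show w - c + -(b j) = w - b j - c from by ring, norm_neg] at h1
      have := hbnorm j
      have h2 : s * M ≤ 1/100 := by
        have := hδ4
        linarith [hsmall, hδle1]
      linarith [hbnorm j]
    have hv : ‖w' - b j - c‖ ≤ 1/50 := by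
      have h1 : w' - b j - c = (starRingEnd ℂ) (w - b j - (starRingEnd ℂ) c) := by
        rw [map_sub, map_sub, hbconj j, Complex.conj_conj, hw']
      have hcc : (starRingEnd ℂ) c = c := by rcases hc with h | h <;> simp [h]
      rw [h1, hcc, RCLike.norm_conj]
      exact hu
    have := term_est c (w - b j - c) (w' - b j - c) hc hu hv
    have heq2 : (c + (w - b j - c)) * (c + (w' - b j - c)) = (w - b j) * (w' - b j) := by ring
    rw [heq2] at this
    have heq3 : (w - b j - c) + (w' - b j - c) + 2*c = w + w' - 2 * b j := by ring
    rw [heq3] at this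
    have heq4 : ((w - b j) * (w' - b j))^2 = (w - b j)^2 * (w' - b j)^2 := by ring
    rw [heq4] at this
    exact this.2
  -- contradiction: the sum is far from 0
  have hfinal : ‖(0:ℂ) - 2*c‖ ≤ 1 := by
    rw [← hS]
    have h1 : ∑ j, (ε j : ℂ) * ((w + w' - 2 * b j)/((w - b j)^2 * (w' - b j)^2)) - 2*c
        = ∑ j, (ε j : ℂ) * ((w + w' - 2 * b j)/((w - b j)^2 * (w' - b j)^2) - 2*c) := by
      have h2 : ∑ j, (ε j:ℂ) * ((w + w' - 2 * b j)/((w - b j)^2 * (w' - b j)^2) - 2*c)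
          = ∑ j, ((ε j:ℂ) * ((w + w' - 2 * b j)/((w - b j)^2 * (w' - b j)^2))
              - (ε j:ℂ) * (2*c)) :=
        Finset.sum_congr rfl fun j _ => by ring
      rw [h2, Finset.sum_sub_distrib, ← Finset.sum_mul, hsumC, one_mul]
    rw [h1]
    refine le_trans (norm_sum_le _ _) ?_
    have h3 : ∀ j : Fin k, ‖(ε j : ℂ) *
        ((w + w' - 2 * b j)/((w - b j)^2 * (w' - b j)^2) - 2*c)‖ ≤ ε j := by
      intro j
      rw [norm_mul, Complex.norm_real, Real.norm_eq_abs, abs_of_pos (hε j)]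
      calc ε j * ‖(w + w' - 2 * b j)/((w - b j)^2 * (w' - b j)^2) - 2*c‖
          ≤ ε j * 1 := mul_le_mul_of_nonneg_left (hterm3 j) (hε j).le
      _ = ε j := mul_one _
    refine le_trans (Finset.sum_le_sum fun j _ => h3 j) ?_
    rw [hsum]
  rw [zero_sub, norm_neg, norm_mul, hcnorm] at hfinal
  norm_num at hfinal

lemma Qs_conj {k : ℕ} (a ε : Fin k → ℝ) (Qs : ℝ → Polynomial ℂ)
    (hQs : ∀ s : ℝ, Qs s = ∏ i, (X - C ((s : ℂ) * (a i : ℂ))) ^ 2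
        - ∑ i, C ((ε i : ℂ)) *
            ∏ j ∈ Finset.univ.erase i, (X - C ((s : ℂ) * (a j : ℂ))) ^ 2)
    (s : ℝ) (w : ℂ) :
    (Qs s).eval ((starRingEnd ℂ) w) = (starRingEnd ℂ) ((Qs s).eval w) := by
  rw [evalQ a ε Qs hQs s w, evalQ a ε Qs hQs s ((starRingEnd ℂ) w)]
  rw [map_sub, map_prod, map_sum]
  congr 1
  · apply Finset.prod_congr rfl
    intro i _
    rw [map_pow, map_sub, map_mul, Complex.conj_ofReal, Complex.conj_ofReal]
  · apply Finset.sum_congr rfl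
    intro i _
    rw [map_mul, Complex.conj_ofReal, map_prod]
    congr 1
    apply Finset.prod_congr rfl
    intro j _
    rw [map_pow, map_sub, map_mul, Complex.conj_ofReal, Complex.conj_ofReal]

set_option maxHeartbeats 1000000 in
/-- small-time configuration. For `s` small, the branch-point equation
`∑_j ε_j/(z - s·a_j)² = 1` has exactly two real solutions, converging to `∓1` as `s → 0⁺`,
while the remaining `2k - 2` roots of the branch-point polynomial `Q_s` are nonreal,
come in complex-conjugate pairs, and converge to `0`. -/
theorem stmt_8 (k : ℕ) (hk : 1 ≤ k) (a ε : Fin k → ℝ)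
    (ha : StrictMono a) (hε : ∀ i, 0 < ε i) (hsum : ∑ i, ε i = 1)
    (Qs : ℝ → Polynomial ℂ)
    (hQs : ∀ s : ℝ, Qs s = ∏ i, (X - C ((s : ℂ) * (a i : ℂ))) ^ 2
        - ∑ i, C ((ε i : ℂ)) *
            ∏ j ∈ Finset.univ.erase i, (X - C ((s : ℂ) * (a j : ℂ))) ^ 2) :
    ∃ s₁ > (0 : ℝ), ∃ r₁ r₂ : ℝ → ℝ,
      (∀ s : ℝ, 0 < s → s < s₁ →
        r₁ s < r₂ s ∧
        ({x : ℝ | (∀ j, x ≠ s * a j) ∧ ∑ j, ε j / (x - s * a j) ^ 2 = 1}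
          = {r₁ s, r₂ s}) ∧
        (∀ w : ℂ, (Qs s).eval w = 0 → w.im = 0 → (w = (r₁ s : ℂ) ∨ w = (r₂ s : ℂ))) ∧
        (∀ w : ℂ, (Qs s).eval w = 0 → w.im ≠ 0 →
          (Qs s).eval ((starRingEnd ℂ) w) = 0)) ∧
      Tendsto r₁ (nhdsWithin 0 (Set.Ioi 0)) (nhds (-1)) ∧
      Tendsto r₂ (nhdsWithin 0 (Set.Ioi 0)) (nhds 1) ∧
      (∀ δ : ℝ, 0 < δ → ∃ s₂ > (0 : ℝ), ∀ s : ℝ, 0 < s → s < min s₁ s₂ →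
        ∀ w : ℂ, (Qs s).eval w = 0 → w.im ≠ 0 → ‖w‖ < δ) := by
  classical
  obtain ⟨s₁, hs₁pos, M, hM1, habsM, hmain⟩ := realside k hk a ε ha hε hsum
  have hMpos : 0 < M := by linarith
  have hch : ∀ s : ℝ, ∃ q : ℝ × ℝ,
      ((0 < s ∧ s < s₁) → (q.1 < q.2 ∧ |q.1 + 1| ≤ s*M ∧ |q.2 - 1| ≤ s*M ∧
        {z : ℝ | (∀ j, z ≠ s * a j) ∧ ∑ j, ε j / (z - s * a j) ^ 2 = 1} = {q.1, q.2})) := by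
    intro s
    by_cases h : 0 < s ∧ s < s₁
    · obtain ⟨x, y, h1, h2, h3, h4⟩ := hmain s h.1 h.2
      exact ⟨(x, y), fun _ => ⟨h1, h2, h3, h4⟩⟩
    · exact ⟨(-1, 1), fun hc => absurd hc h⟩
  choose q hq using hch
  refine ⟨s₁, hs₁pos, fun s => (q s).1, fun s => (q s).2, ?_, ?_, ?_, ?_⟩
  · intro s hs0 hss₁
    obtain ⟨h1, h2, h3, h4⟩ := hq s ⟨hs0, hss₁⟩
    refine ⟨h1, h4, ?_, ?_⟩
    · -- real roots of Qs are the two solutions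
      intro w hroot him
      have hwre : w = ((w.re : ℝ) : ℂ) := Complex.ext (by simp) (by simp [him])
      set x : ℝ := w.re with hx
      have hxne : ∀ j, x ≠ s * a j := by
        intro j hxj
        have hpole := evalQ_pole_ne a ε Qs hQs ha.injective hε s hs0.ne' j
        apply hpole
        have hww : w = (s:ℂ) * (a j : ℂ) := by
          rw [hwre, hxj]; push_cast; ring
        rw [← hww]; exact hroot
      have hwC : ∀ j, w ≠ (s:ℂ) * (a j : ℂ) := by
        intro j h
        apply hxne j
        have : ((x : ℝ) : ℂ) = ((s * a j : ℝ) : ℂ) := by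
          rw [← hwre, h]; push_cast; ring
        exact_mod_cast this
      have hfac := evalQ_factor a ε Qs hQs s w hwC
      rw [hroot] at hfac
      have hprod : (∏ i, (w - (s:ℂ)*(a i:ℂ))^2) ≠ 0 :=
        Finset.prod_ne_zero_iff.mpr fun i _ => pow_ne_zero _ (sub_ne_zero.mpr (hwC i))
      have hsume : ∑ i, (ε i:ℂ)/(w - (s:ℂ)*(a i:ℂ))^2 = 1 := by
        rcases mul_eq_zero.mp hfac.symm with h | h
        · exact absurd h hprod
        · have h5 := sub_eq_zero.mp h
          exact h5.symm
      rw [hwre] at hsume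
      have hreal : ∑ j, ε j / (x - s * a j) ^ 2 = 1 := by
        have hcast : ∀ j : Fin k, ((x:ℝ):ℂ) - (s:ℂ)*(a j:ℂ) = ((x - s * a j : ℝ) : ℂ) := by
          intro j; push_cast; ring
        have h6 : ∑ j, ((ε j / (x - s * a j)^2 : ℝ) : ℂ) = 1 := by
          rw [← hsume]
          apply Finset.sum_congr rfl
          intro j _
          rw [hcast j]
          push_cast
          ring
        exact_mod_cast h6
      have hxmem : x ∈ {z : ℝ | (∀ j, z ≠ s * a j) ∧ ∑ j, ε j / (z - s * a j) ^ 2 = 1} :=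
        ⟨hxne, hreal⟩
      rw [h4] at hxmem
      rcases hxmem with h | h
      · left; rw [hwre, h]
      · right; rw [hwre, h]
    · intro w hroot _
      rw [Qs_conj a ε Qs hQs, hroot, map_zero]
  · rw [Metric.tendsto_nhdsWithin_nhds]
    intro e he
    refine ⟨min s₁ (e/(2*M)), lt_min hs₁pos (by positivity), ?_⟩
    intro s hsIoi hdist
    have hs0 : 0 < s := hsIoi
    rw [Real.dist_eq, sub_zero, abs_of_pos hs0] at hdist
    have hslt : s < s₁ := lt_of_lt_of_le hdist (min_le_left _ _)
    have hse : s < e/(2*M) := lt_of_lt_of_le hdist (min_le_right _ _)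
    have h2 := (hq s ⟨hs0, hslt⟩).2.1
    rw [Real.dist_eq, sub_neg_eq_add]
    have : s * M < (e/(2*M)) * M := mul_lt_mul_of_pos_right hse hMpos
    have heq2 : (e/(2*M)) * M = e/2 := by field_simp
    calc |(q s).1 + 1| ≤ s * M := h2
    _ < e := by rw [heq2] at this; linarith
  · rw [Metric.tendsto_nhdsWithin_nhds]
    intro e he
    refine ⟨min s₁ (e/(2*M)), lt_min hs₁pos (by positivity), ?_⟩
    intro s hsIoi hdist
    have hs0 : 0 < s := hsIoi
    rw [Real.dist_eq, sub_zero, abs_of_pos hs0] at hdist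
    have hslt : s < s₁ := lt_of_lt_of_le hdist (min_le_left _ _)
    have hse : s < e/(2*M) := lt_of_lt_of_le hdist (min_le_right _ _)
    have h2 := (hq s ⟨hs0, hslt⟩).2.2.1
    rw [Real.dist_eq]
    have : s * M < (e/(2*M)) * M := mul_lt_mul_of_pos_right hse hMpos
    have heq2 : (e/(2*M)) * M = e/2 := by field_simp
    calc |(q s).2 - 1| ≤ s * M := h2
    _ < e := by rw [heq2] at this; linarith
  · intro δ hδ
    set δ' : ℝ := min δ (1/100) with hδ'
    have hδ'pos : 0 < δ' := lt_min hδ (by norm_num)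
    refine ⟨δ'^4/(8000*M), by positivity, ?_⟩
    intro s hs0 hslt w hroot him
    have hs2 : s < δ'^4/(8000*M) := lt_of_lt_of_le hslt (min_le_right _ _)
    have hwC : ∀ j, w ≠ (s:ℂ) * (a j : ℂ) := by
      intro j h
      apply him
      rw [h]
      simp
    have hfac := evalQ_factor a ε Qs hQs s w hwC
    rw [hroot] at hfac
    have hprod : (∏ i, (w - (s:ℂ)*(a i:ℂ))^2) ≠ 0 :=
      Finset.prod_ne_zero_iff.mpr fun i _ => pow_ne_zero _ (sub_ne_zero.mpr (hwC i))
    have hsume : ∑ i, (ε i:ℂ)/(w - (s:ℂ)*(a i:ℂ))^2 = 1 := by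
      rcases mul_eq_zero.mp hfac.symm with h | h
      · exact absurd h hprod
      · exact (sub_eq_zero.mp h).symm
    have hsmall : s * M ≤ δ'^4/8000 := by
      have h1 : s * M < (δ'^4/(8000*M)) * M := mul_lt_mul_of_pos_right hs2 hMpos
      have h2 : (δ'^4/(8000*M)) * M = δ'^4/8000 := by field_simp
      linarith [h2 ▸ h1]
    have habs := complex_loc k a ε hε hsum s M hM1 habsM hs0 δ' hδ'pos
      (min_le_right _ _) hsmall w him hsume
    exact lt_of_lt_of_le habs (min_le_left _ _)
end
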